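/- arXiv:math/0304332 — 3 statements merged into one kernel-verified Lean document; each statement's English description precedes it below -/
import Mathlib

section
/- There do not exist harmonic functions v₀, v₁ on the open unit disc {z ∈ ℂ : |z| < 1}, neither of which is identically zero, such that v₀⁺ = v₁⁺ pointwise, max(v₀(z), v₁(z)) ≥ 0 for all z in the disc, and v₀(0) = v₁(0) = 0. -/
set_option maxHeartbeats 1000000

open Complex Metric Set Real

/-- The Laplacian `∂²u/∂x² + ∂²u/∂y²` of a function `u : ℂ → ℝ`,
under the identification `ℂ ≅ ℝ²`. -/
noncomputable def laplacian (u : ℂ → ℝ) (z : ℂ) : ℝ :=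
  fderiv ℝ (fun w => fderiv ℝ u w 1) z 1 +
    fderiv ℝ (fun w => fderiv ℝ u w Complex.I) z Complex.I

/-- `u` is harmonic on the open set `U ⊆ ℂ`: it is twice continuously
differentiable on `U` and its Laplacian vanishes identically on `U`. -/
def IsHarmonicOn (u : ℂ → ℝ) (U : Set ℂ) : Prop :=
  ContDiffOn ℝ 2 u U ∧ ∀ z ∈ U, laplacian u z = 0

/-- The "conjugate derivative" `uₓ - i u_y` of a function `u : ℂ → ℝ`. -/
noncomputable def gc (u : ℂ → ℝ) (z : ℂ) : ℂ :=
  (fderiv ℝ u z 1 : ℝ) - (fderiv ℝ u z Complex.I : ℝ) * Complex.I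

lemma clm_ext_complex {F : Type*} [NormedAddCommGroup F] [NormedSpace ℝ F]
    {L M : ℂ →L[ℝ] F} (h1 : L 1 = M 1) (hI : L Complex.I = M Complex.I) : L = M := by
  ext w
  have hw : w = w.re • (1 : ℂ) + w.im • Complex.I := by
    simp [Complex.real_smul]
  rw [hw, map_add, map_add, map_smul, map_smul, map_smul, map_smul, h1, hI]

/-- The real derivative of `u` is recovered from `gc u`. -/
lemma fderiv_eq_gc {u : ℂ → ℝ} {z : ℂ} (w : ℂ) :
    fderiv ℝ u z w = (gc u z * w).re := by
  set L := fderiv ℝ u z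
  have hw : w = w.re • (1 : ℂ) + w.im • Complex.I := by
    simp [Complex.real_smul]
  have : L w = w.re * L 1 + w.im * L Complex.I := by
    conv_lhs => rw [hw]
    rw [map_add, map_smul, map_smul, smul_eq_mul, smul_eq_mul]
  rw [this]
  simp [gc, Complex.sub_re, Complex.mul_re]
  ring

/-- Cauchy–Riemann: the conjugate derivative of a harmonic function is holomorphic. -/
lemma gc_differentiableAt {u : ℂ → ℝ} {U : Set ℂ} (hU : IsOpen U)
    (hu : IsHarmonicOn u U) {z : ℂ} (hz : z ∈ U) : DifferentiableAt ℂ (gc u) z := by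
  have hcd : ContDiffAt ℝ 2 u z := hu.1.contDiffAt (hU.mem_nhds hz)
  have hF : ContDiffAt ℝ 1 (fderiv ℝ u) z := hcd.fderiv_right (by norm_num)
  have hFd : DifferentiableAt ℝ (fderiv ℝ u) z := hF.differentiableAt (by norm_num)
  set F' := fderiv ℝ (fderiv ℝ u) z with hF'def
  have hF' : HasFDerivAt (fderiv ℝ u) F' z := hFd.hasFDerivAt
  -- symmetry of second derivative
  have hsymm : ∀ v w : ℂ, F' v w = F' w v := by
    intro v w
    refine second_derivative_symmetric_of_eventually (f := u) ?_ hF' v w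
    filter_upwards [hU.mem_nhds hz] with y hy
    exact (hu.1.contDiffAt (hU.mem_nhds hy)).differentiableAt (by norm_num) |>.hasFDerivAt
  -- evaluation maps
  set A1 : (ℂ →L[ℝ] ℝ) →L[ℝ] ℝ := ContinuousLinearMap.apply ℝ ℝ (1 : ℂ) with hA1
  set AI : (ℂ →L[ℝ] ℝ) →L[ℝ] ℝ := ContinuousLinearMap.apply ℝ ℝ (Complex.I) with hAI
  -- laplacian gives F' I I = - F' 1 1
  have h1 : HasFDerivAt (fun w => fderiv ℝ u w 1) (A1.comp F') z :=
    A1.hasFDerivAt.comp z hF'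
  have hI : HasFDerivAt (fun w => fderiv ℝ u w Complex.I) (AI.comp F') z :=
    AI.hasFDerivAt.comp z hF'
  have hlap : F' 1 1 + F' Complex.I Complex.I = 0 := by
    have := hu.2 z hz
    rw [laplacian, h1.fderiv, hI.fderiv] at this
    exact this
  -- real differentiability of gc
  have hg : HasFDerivAt (fun w => ((fderiv ℝ u w 1 : ℝ) : ℂ) - (fderiv ℝ u w Complex.I) • Complex.I)
      ((Complex.ofRealCLM.comp (A1.comp F')) - ((AI.comp F').smulRight Complex.I)) z :=
    (Complex.ofRealCLM.hasFDerivAt.comp z h1).sub (hI.smul_const Complex.I)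
  have hg2 : HasFDerivAt (gc u)
      ((Complex.ofRealCLM.comp (A1.comp F')) - ((AI.comp F').smulRight Complex.I)) z := by
    have : (fun w => ((fderiv ℝ u w 1 : ℝ) : ℂ) - (fderiv ℝ u w Complex.I) • Complex.I) = gc u := by
      funext w; simp [gc, Complex.real_smul]
    rwa [this] at hg
  -- complex linearity of the derivative
  set c : ℂ := (F' 1 1 : ℝ) - (F' 1 Complex.I : ℝ) * Complex.I with hc
  have hrs : (c • ContinuousLinearMap.id ℂ ℂ).restrictScalars ℝ
      = (Complex.ofRealCLM.comp (A1.comp F')) - ((AI.comp F').smulRight Complex.I) := by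
    apply clm_ext_complex
    · simp [hc, hA1, hAI, Complex.real_smul]
    · have e1 : F' Complex.I 1 = F' 1 Complex.I := hsymm _ _
      have e2 : F' Complex.I Complex.I = - F' 1 1 := by linarith
      simp [hc, hA1, hAI, e1, e2, Complex.real_smul]
      rw [sub_mul, mul_assoc, Complex.I_mul_I]; ring
  exact (hasFDerivAt_of_restrictScalars ℝ hg2 hrs).differentiableAt

lemma isHarmonicOn_zero (U : Set ℂ) : IsHarmonicOn (fun _ => (0:ℝ)) U := by
  refine ⟨contDiffOn_const, fun z _ => ?_⟩
  simp [laplacian, fderiv_const]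

/-- Identity theorem: two harmonic functions on the disc agreeing on a nonempty
open subset agree on the whole disc. -/
lemma harmonic_eqOn_of_eqOn_open {u₀ u₁ : ℂ → ℝ} (h₀ : IsHarmonicOn u₀ (ball 0 1))
    (h₁ : IsHarmonicOn u₁ (ball 0 1)) {V : Set ℂ} (hV : IsOpen V)
    (hVB : V ⊆ ball (0:ℂ) 1) {a : ℂ} (ha : a ∈ V)
    (heq : Set.EqOn u₀ u₁ V) : Set.EqOn u₀ u₁ (ball (0:ℂ) 1) := by
  set d : ℂ → ℂ := fun z => gc u₀ z - gc u₁ z with hd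
  have hdan : AnalyticOnNhd ℂ d (ball 0 1) := by
    apply DifferentiableOn.analyticOnNhd _ isOpen_ball
    intro z hz
    exact ((gc_differentiableAt isOpen_ball h₀ hz).sub
      (gc_differentiableAt isOpen_ball h₁ hz)).differentiableWithinAt
  have hgceq : ∀ z ∈ V, gc u₀ z = gc u₁ z := by
    intro z hz
    have hfe : u₀ =ᶠ[nhds z] u₁ := by
      filter_upwards [hV.mem_nhds hz] with y hy using heq hy
    have : fderiv ℝ u₀ z = fderiv ℝ u₁ z := hfe.fderiv_eq
    simp [gc, this]
  have hz0 : Set.EqOn d 0 (ball (0:ℂ) 1) := by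
    apply hdan.eqOn_zero_of_preconnected_of_eventuallyEq_zero
      (convex_ball (0:ℂ) 1).isPreconnected (hVB ha)
    filter_upwards [hV.mem_nhds ha] with y hy
    simp [hd, hgceq y hy]
  -- now the difference has zero derivative on the (convex) ball
  have hdiff : DifferentiableOn ℝ (fun z => u₀ z - u₁ z) (ball (0:ℂ) 1) :=
    (h₀.1.differentiableOn (by norm_num)).sub (h₁.1.differentiableOn (by norm_num))
  have hfd0 : ∀ z ∈ ball (0:ℂ) 1, fderivWithin ℝ (fun z => u₀ z - u₁ z) (ball (0:ℂ) 1) z = 0 := by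
    intro z hz
    rw [fderivWithin_of_isOpen isOpen_ball hz]
    have hd₀ : DifferentiableAt ℝ u₀ z :=
      (h₀.1.contDiffAt (isOpen_ball.mem_nhds hz)).differentiableAt (by norm_num)
    have hd₁ : DifferentiableAt ℝ u₁ z :=
      (h₁.1.contDiffAt (isOpen_ball.mem_nhds hz)).differentiableAt (by norm_num)
    rw [fderiv_fun_sub hd₀ hd₁]
    have hgz : gc u₀ z = gc u₁ z := by
      have := hz0 hz
      simpa [hd, sub_eq_zero] using this
    ext w
    simp [fderiv_eq_gc w, hgz]
  intro z hz
  have := (convex_ball (0:ℂ) 1).is_const_of_fderivWithin_eq_zero hdiff hfd0 hz (hVB ha)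
  have ha' : u₀ a - u₁ a = 0 := by rw [heq ha]; ring
  have : u₀ z - u₁ z = 0 := by rw [this, ha']
  linarith

/-- Strong minimum principle at the centre, via the mean value property. -/
lemma harmonic_zero_of_nonneg {u : ℂ → ℝ} (hu : IsHarmonicOn u (ball 0 1))
    (hnn : ∀ z ∈ ball (0:ℂ) 1, 0 ≤ u z) (h0 : u 0 = 0) :
    ∀ z ∈ ball (0:ℂ) 1, u z = 0 := by
  intro z₀ hz₀
  by_contra hne
  have hpos : 0 < u z₀ := lt_of_le_of_ne (hnn z₀ hz₀) (Ne.symm hne)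
  have hz00 : z₀ ≠ 0 := by rintro rfl; exact hne h0
  set r : ℝ := ‖z₀‖ with hr
  have hr0 : 0 < r := by simpa [hr] using hz00
  have hr1 : r < 1 := by simpa [hr, mem_ball_zero_iff] using hz₀
  set w : ℝ → ℂ := fun θ => (r : ℂ) * Complex.exp (θ * Complex.I) with hw
  have habsw : ∀ θ, ‖w θ‖ = r := by
    intro θ; simp [hw, Complex.norm_exp_ofReal_mul_I, abs_of_pos hr0]
  have hwmem : ∀ θ, w θ ∈ ball (0:ℂ) 1 := by
    intro θ; simp [mem_ball_zero_iff, habsw θ, hr1]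
  have hmem : ∀ t : ℝ, t ∈ Icc (0:ℝ) 1 → ∀ θ, t • w θ ∈ ball (0:ℂ) 1 := by
    intro t ht θ
    rw [mem_ball_zero_iff]
    have : ‖(t : ℝ) • w θ‖ = |t| * r := by
      rw [Complex.real_smul, norm_mul, Complex.norm_real, Real.norm_eq_abs, habsw θ]
    rw [this, _root_.abs_of_nonneg ht.1]
    calc t * r ≤ 1 * r := by nlinarith [ht.2]
    _ < 1 := by simpa using hr1
  have hucont : ContinuousOn u (ball (0:ℂ) 1) := hu.1.continuousOn
  have hgcont : ContinuousOn (gc u) (ball (0:ℂ) 1) := fun z hz =>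
    (gc_differentiableAt isOpen_ball hu hz).continuousAt.continuousWithinAt
  -- the integrand
  set φ : ℝ → ℝ → ℝ := fun θ t => (gc u (t • w θ) * w θ).re with hφ
  -- continuity of the full integrand
  have hwcont : Continuous w := by continuity
  have hmcont : Continuous (fun p : ℝ × ℝ => p.2 • w p.1) := by
    exact (continuous_snd.smul (hwcont.comp continuous_fst))
  have huncurry : ContinuousOn (fun p : ℝ × ℝ => φ p.1 p.2) (Icc (-π) π ×ˢ Icc (0:ℝ) 1) := by
    apply Complex.continuous_re.comp_continuousOn
    apply ContinuousOn.mul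
    · apply hgcont.comp hmcont.continuousOn
      intro p hp
      exact hmem p.2 hp.2 p.1
    · exact (hwcont.comp continuous_fst).continuousOn
  -- Step a : FTC along rays
  have stepa : ∀ θ : ℝ, u (w θ) = ∫ t in (0:ℝ)..1, φ θ t := by
    intro θ
    have key : ∀ t ∈ uIcc (0:ℝ) 1, HasDerivAt (fun s : ℝ => u (s • w θ)) (φ θ t) t := by
      intro t ht
      rw [uIcc_of_le zero_le_one] at ht
      have hmem' := hmem t ht θ
      have hcurve : HasDerivAt (fun s : ℝ => s • w θ) (w θ) t := by
        simpa using (hasDerivAt_id t).smul_const (w θ)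
      have hdu : DifferentiableAt ℝ u (t • w θ) :=
        (hu.1.contDiffAt (isOpen_ball.mem_nhds hmem')).differentiableAt (by norm_num)
      have h2 := hdu.hasFDerivAt.comp_hasDerivAt t hcurve
      rw [fderiv_eq_gc (w θ)] at h2
      exact h2
    have hint : IntervalIntegrable (φ θ) MeasureTheory.volume 0 1 := by
      apply ContinuousOn.intervalIntegrable
      rw [uIcc_of_le zero_le_one]
      apply Complex.continuous_re.comp_continuousOn
      apply ContinuousOn.mul _ continuousOn_const
      apply hgcont.comp ((continuous_id.smul continuous_const).continuousOn)
      intro t ht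
      exact hmem t ht θ
    have := intervalIntegral.integral_eq_sub_of_hasDerivAt key hint
    rw [this]
    simp [h0]
  -- Step c : the inner integral vanishes by Cauchy's theorem
  have stepc : ∀ t : ℝ, t ∈ Ioc (0:ℝ) 1 → (∫ θ in (-π)..π, φ θ t) = 0 := by
    intro t ht
    set s : ℝ := t * r with hs
    have hs0 : 0 < s := mul_pos ht.1 hr0
    have hs1 : s < 1 := by nlinarith [ht.2, hr1, hr0]
    have hsub : closedBall (0:ℂ) s ⊆ ball (0:ℂ) 1 := by
      apply closedBall_subset_ball; simpa using hs1
    have hcirc : (∮ z in C((0:ℂ), s), gc u z) = 0 := by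
      apply circleIntegral_eq_zero_of_differentiable_on_off_countable hs0.le
        Set.countable_empty (hgcont.mono hsub)
      intro z hz
      exact gc_differentiableAt isOpen_ball hu (ball_subset_ball hs1.le hz.1)
    set ψ : ℝ → ℂ := fun θ => deriv (circleMap 0 s) θ • gc u (circleMap 0 s θ) with hψ
    have hψint0 : (∫ θ in (0:ℝ)..(2*π), ψ θ) = 0 := hcirc
    have hcm : ∀ θ, circleMap 0 s θ = t • w θ := by
      intro θ
      simp only [circleMap, hw, Complex.real_smul, hs]
      push_cast
      ring
    have hcmmem : ∀ θ, circleMap 0 s θ ∈ ball (0:ℂ) 1 := by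
      intro θ; rw [hcm θ]; exact hmem t ⟨ht.1.le, ht.2⟩ θ
    have hψcont : Continuous ψ := by
      have h1 : Continuous (fun θ => gc u (circleMap 0 s θ)) :=
        hgcont.comp_continuous (continuous_circleMap 0 s) hcmmem
      have h2 : Continuous (deriv (circleMap 0 s)) := by
        have he : deriv (circleMap 0 s) = fun θ => circleMap 0 s θ * Complex.I :=
          funext (deriv_circleMap 0 s)
        rw [he]
        exact (continuous_circleMap 0 s).mul continuous_const
      exact h2.smul h1
    set c₀ : ℂ := (r : ℂ) / ((s : ℂ) * Complex.I) with hc₀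
    have hkey : ∀ θ, φ θ t = (c₀ * ψ θ).re := by
      intro θ
      have htne : (t:ℂ) ≠ 0 := by exact_mod_cast ht.1.ne'
      have hrne : (r:ℂ) ≠ 0 := by exact_mod_cast hr0.ne'
      simp only [hφ, hψ, deriv_circleMap, smul_eq_mul, hcm θ, Complex.real_smul, hc₀, hs, hw, circleMap, zero_add]
      push_cast
      congr 1
      field_simp
    have hper : Function.Periodic (fun θ => φ θ t) (2*π) := by
      intro θ
      have : w (θ + 2*π) = w θ := by
        simp only [hw]
        push_cast
        rw [add_mul, Complex.exp_add, Complex.exp_two_pi_mul_I, mul_one]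
      simp only [hφ, this]
    have hshift : (∫ θ in (-π)..π, φ θ t) = ∫ θ in (0:ℝ)..(2*π), φ θ t := by
      have h2 := hper.intervalIntegral_add_eq (-π) 0
      rw [show -π + 2*π = π by ring] at h2
      rw [show (2:ℝ)*π = 0 + 2*π by ring]
      exact h2
    rw [hshift]
    have hψii : IntervalIntegrable (fun θ => c₀ • ψ θ) MeasureTheory.volume 0 (2*π) :=
      (hψcont.const_smul c₀).intervalIntegrable _ _
    calc (∫ θ in (0:ℝ)..(2*π), φ θ t)
        = ∫ θ in (0:ℝ)..(2*π), Complex.reCLM (c₀ • ψ θ) := by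
          apply intervalIntegral.integral_congr
          intro θ _
          simp only [hkey θ, Complex.reCLM_apply, smul_eq_mul]
      _ = Complex.reCLM (∫ θ in (0:ℝ)..(2*π), c₀ • ψ θ) :=
          Complex.reCLM.intervalIntegral_comp_comm hψii
      _ = 0 := by
          rw [intervalIntegral.integral_smul, hψint0]
          simp
  -- Step b : Fubini
  have hK : (∫ θ in (-π)..π, u (w θ)) = 0 := by
    have hpi : -π ≤ π := by linarith [Real.pi_pos]
    have e1 : (∫ θ in (-π)..π, u (w θ)) = ∫ θ in (-π)..π, ∫ t in (0:ℝ)..1, φ θ t :=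
      intervalIntegral.integral_congr (fun θ _ => stepa θ)
    rw [e1, intervalIntegral.integral_of_le hpi]
    have e2 : ∀ θ, (∫ t in (0:ℝ)..1, φ θ t) = ∫ t in Ioc (0:ℝ) 1, φ θ t := fun θ =>
      intervalIntegral.integral_of_le zero_le_one
    simp_rw [e2]
    have hintg : MeasureTheory.Integrable (Function.uncurry φ)
        ((MeasureTheory.volume.restrict (Ioc (-π) π)).prod
          (MeasureTheory.volume.restrict (Ioc (0:ℝ) 1))) := by
      have h1 : MeasureTheory.IntegrableOn (Function.uncurry φ) (Icc (-π) π ×ˢ Icc (0:ℝ) 1)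
          ((MeasureTheory.volume : MeasureTheory.Measure ℝ).prod
            (MeasureTheory.volume : MeasureTheory.Measure ℝ)) :=
        huncurry.integrableOn_compact (isCompact_Icc.prod isCompact_Icc)
      have h2 := h1.mono_set (Set.prod_mono Ioc_subset_Icc_self Ioc_subset_Icc_self)
      rwa [MeasureTheory.IntegrableOn, ← MeasureTheory.Measure.prod_restrict] at h2
    have hswap := MeasureTheory.integral_integral_swap hintg
    rw [hswap]
    have : ∀ t ∈ Ioc (0:ℝ) 1, (∫ θ in Ioc (-π) π, φ θ t) = 0 := by
      intro t ht
      rw [← intervalIntegral.integral_of_le hpi]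
      exact stepc t ht
    rw [MeasureTheory.setIntegral_congr_fun measurableSet_Ioc this]
    simp
  -- contradiction with positivity at z₀
  have hKpos : 0 < ∫ θ in (-π)..π, u (w θ) := by
    apply intervalIntegral.integral_pos (by linarith [Real.pi_pos])
    · exact hucont.comp hwcont.continuousOn (fun θ _ => hwmem θ)
    · exact fun θ _ => hnn _ (hwmem θ)
    · refine ⟨Complex.arg z₀, ?_, ?_⟩
      · exact Ioc_subset_Icc_self (Complex.arg_mem_Ioc z₀)
      · have : w (Complex.arg z₀) = z₀ := by
          rw [hw]; exact Complex.norm_mul_exp_arg_mul_I z₀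
        rw [this]; exact hpos
  rw [hK] at hKpos
  exact lt_irrefl 0 hKpos


/-- There are no harmonic functions `v₀, v₁` on the unit disc, neither
identically zero, with `v₀⁺ = v₁⁺` pointwise, `max(v₀, v₁) ≥ 0`, and
`v₀(0) = v₁(0) = 0`. -/
theorem no_harmonic_pair_on_disc :
    ¬ ∃ v₀ v₁ : ℂ → ℝ,
      IsHarmonicOn v₀ (Metric.ball (0 : ℂ) 1) ∧
      IsHarmonicOn v₁ (Metric.ball (0 : ℂ) 1) ∧
      (¬ ∀ z ∈ Metric.ball (0 : ℂ) 1, v₀ z = 0) ∧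
      (¬ ∀ z ∈ Metric.ball (0 : ℂ) 1, v₁ z = 0) ∧
      (∀ z ∈ Metric.ball (0 : ℂ) 1, max (v₀ z) 0 = max (v₁ z) 0) ∧
      (∀ z ∈ Metric.ball (0 : ℂ) 1, 0 ≤ max (v₀ z) (v₁ z)) ∧
      v₀ 0 = 0 ∧ v₁ 0 = 0 := by
  rintro ⟨v₀, v₁, h₀, h₁, hn₀, hn₁, hplus, hmax, hz₀, hz₁⟩
  by_cases hcase : ∃ a ∈ Metric.ball (0:ℂ) 1, 0 < v₀ a
  · rcases hcase with ⟨a, haB, hapos⟩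
    set V := Metric.ball (0:ℂ) 1 ∩ v₀ ⁻¹' (Set.Ioi 0) with hV
    have hVopen : IsOpen V :=
      ContinuousOn.isOpen_inter_preimage h₀.1.continuousOn Metric.isOpen_ball isOpen_Ioi
    have hVB : V ⊆ Metric.ball (0:ℂ) 1 := Set.inter_subset_left
    have haV : a ∈ V := ⟨haB, hapos⟩
    have heqV : Set.EqOn v₀ v₁ V := by
      intro z hz
      have h1 := hplus z hz.1
      have h2 : (0:ℝ) < v₀ z := hz.2
      rw [max_eq_left h2.le] at h1
      rcases le_or_gt (v₁ z) 0 with h | h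
      · rw [max_eq_right h] at h1; linarith
      · rw [max_eq_left h.le] at h1; exact h1
    have heqB : Set.EqOn v₀ v₁ (Metric.ball 0 1) :=
      harmonic_eqOn_of_eqOn_open h₀ h₁ hVopen hVB haV heqV
    have hnn : ∀ z ∈ Metric.ball (0:ℂ) 1, 0 ≤ v₀ z := by
      intro z hz
      have h3 := hmax z hz
      rw [← heqB hz, max_self] at h3
      exact h3
    have := harmonic_zero_of_nonneg h₀ hnn hz₀ a haB
    linarith
  · push_neg at hcase
    have hbex : ∃ b ∈ Metric.ball (0:ℂ) 1, v₀ b < 0 := by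
      by_contra h; push_neg at h
      exact hn₀ (fun z hz => le_antisymm (hcase z hz) (h z hz))
    rcases hbex with ⟨b, hbB, hbneg⟩
    set W := Metric.ball (0:ℂ) 1 ∩ v₀ ⁻¹' (Set.Iio 0) with hW
    have hWopen : IsOpen W :=
      ContinuousOn.isOpen_inter_preimage h₀.1.continuousOn Metric.isOpen_ball isOpen_Iio
    have hWB : W ⊆ Metric.ball (0:ℂ) 1 := Set.inter_subset_left
    have hbW : b ∈ W := ⟨hbB, hbneg⟩
    have heqW : Set.EqOn v₁ (fun _ => (0:ℝ)) W := by
      intro z hz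
      have h1 := hplus z hz.1
      have h3 : v₀ z < 0 := hz.2
      rw [max_eq_right h3.le] at h1
      have h4 : v₁ z ≤ 0 := by
        by_contra h; push_neg at h
        rw [max_eq_left h.le] at h1; linarith
      have h5 : 0 ≤ max (v₀ z) (v₁ z) := hmax z hz.1
      have h6 : max (v₀ z) (v₁ z) = 0 :=
        le_antisymm (max_le h3.le h4) h5
      show v₁ z = 0
      rcases le_total (v₀ z) (v₁ z) with h | h
      · rw [max_eq_right h] at h6; exact h6
      · rw [max_eq_left h] at h6; linarith
    have hfin := harmonic_eqOn_of_eqOn_open h₁ (isHarmonicOn_zero _) hWopen hWB hbW heqW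
    exact hn₁ (fun z hz => hfin hz)
end

section
/- Let U ⊆ ℂ be a connected open set and u : U → ℝ a harmonic function. If the set {z ∈ U : u(z) = 0} has positive two-dimensional Lebesgue measure, then u is identically zero on U. -/
open MeasureTheory Metric Filter Topology Set Pointwise

/-- The cone used in the density argument. -/
lemma cone_smul (v' : ℂ) (δ : ℝ) {t : ℝ} (ht : 0 ≤ t) {h : ℂ}
    (hh : ‖h - ‖h‖ • v'‖ ≤ δ * ‖h‖) : ‖t • h - ‖t • h‖ • v'‖ ≤ δ * ‖t • h‖ := by
  have : t • h - ‖t • h‖ • v' = t • (h - ‖h‖ • v') := by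
    rw [norm_smul, Real.norm_eq_abs, abs_of_nonneg ht, smul_sub, smul_smul]
  rw [this, norm_smul, Real.norm_eq_abs, abs_of_nonneg ht, norm_smul, Real.norm_eq_abs,
    abs_of_nonneg ht]
  calc t * ‖h - ‖h‖ • v'‖ ≤ t * (δ * ‖h‖) := by nlinarith [norm_nonneg (h - ‖h‖ • v')]
    _ = δ * (t * ‖h‖) := by ring

lemma fderiv_eq_zero_of_density {S : Set ℂ} {u : ℂ → ℝ} {z : ℂ} {L : ℂ →L[ℝ] ℝ}
    (hL : HasFDerivAt u L z) (hz : z ∈ S) (hS : ∀ w ∈ S, u w = 0) (hSm : MeasurableSet S)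
    (hd : Tendsto (fun r => volume (S ∩ closedBall z r) / volume (closedBall z r))
      (𝓝[>] 0) (𝓝 1)) :
    L = 0 := by
  by_contra hne
  -- find a unit vector with `L v' ≠ 0`
  obtain ⟨v, hv⟩ : ∃ v : ℂ, L v ≠ 0 := by
    by_contra h
    push_neg at h
    exact hne (ContinuousLinearMap.ext fun w => by simp [h w])
  have hv0 : v ≠ 0 := fun h => hv (by simp [h])
  set v' : ℂ := ‖v‖⁻¹ • v with hv'def
  have hv'norm : ‖v'‖ = 1 := by
    rw [hv'def, norm_smul, norm_inv, norm_norm, inv_mul_cancel₀ (norm_ne_zero_iff.2 hv0)]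
  have hLv' : L v' ≠ 0 := by
    rw [hv'def, L.map_smul, smul_eq_mul]
    exact mul_ne_zero (inv_ne_zero (norm_ne_zero_iff.2 hv0)) hv
  clear_value v'
  set c : ℝ := |L v'| with hcdef
  have hc : 0 < c := abs_pos.2 hLv'
  set δ : ℝ := min 1 (c / (4 * (‖L‖ + 1))) with hδdef
  have hδpos : 0 < δ := lt_min one_pos (by positivity)
  have hδ1 : δ ≤ 1 := min_le_left _ _
  have hδL : δ * ‖L‖ ≤ c / 4 := by
    have h1 : δ ≤ c / (4 * (‖L‖ + 1)) := min_le_right _ _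
    have h2 : δ * ‖L‖ ≤ c / (4 * (‖L‖ + 1)) * ‖L‖ :=
      mul_le_mul_of_nonneg_right h1 (norm_nonneg L)
    have h3 : c / (4 * (‖L‖ + 1)) * ‖L‖ ≤ c / 4 := by
      rw [div_mul_eq_mul_div, div_le_div_iff₀ (by positivity) (by norm_num)]
      nlinarith [norm_nonneg L]
    linarith
  set A : Set ℂ := {h : ℂ | ‖h - ‖h‖ • v'‖ ≤ δ * ‖h‖} with hAdef
  have hAclosed : IsClosed A := by
    have : A = {h : ℂ | ‖h - ‖h‖ • v'‖ - δ * ‖h‖ ≤ 0} := by ext h; simp [hAdef, sub_nonpos]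
    rw [this]
    exact isClosed_le (by fun_prop) continuous_const
  -- lower bound on |L h| on the cone
  have hLlower : ∀ h ∈ A, 3 / 4 * c * ‖h‖ ≤ |L h| := by
    intro h hh
    have e : L h = ‖h‖ * L v' + L (h - ‖h‖ • v') := by
      rw [map_sub, L.map_smul, smul_eq_mul]; ring
    have b1 : |L (h - ‖h‖ • v')| ≤ c / 4 * ‖h‖ := by
      calc |L (h - ‖h‖ • v')| ≤ ‖L‖ * ‖h - ‖h‖ • v'‖ := L.le_opNorm _
        _ ≤ ‖L‖ * (δ * ‖h‖) := by
            exact mul_le_mul_of_nonneg_left hh (norm_nonneg L)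
        _ ≤ c / 4 * ‖h‖ := by nlinarith [norm_nonneg h, norm_nonneg L]
    have b2 : ‖h‖ * c - c / 4 * ‖h‖ ≤ |(‖h‖ : ℝ) * L v'| - |L (h - ‖h‖ • v')| := by
      have : |(‖h‖ : ℝ) * L v'| = ‖h‖ * c := by
        rw [abs_mul, abs_of_nonneg (norm_nonneg h), hcdef]
      rw [this]; linarith
    calc 3 / 4 * c * ‖h‖ = ‖h‖ * c - c / 4 * ‖h‖ := by ring
      _ ≤ |‖h‖ * L v'| - |L (h - ‖h‖ • v')| := b2
      _ ≤ |L h| := by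
          rw [e]
          have key := abs_sub_abs_le_abs_sub (‖h‖ * L v') (-(L (h - ‖h‖ • v')))
          rw [abs_neg, sub_neg_eq_add] at key
          linarith
  -- quantitative differentiability bound near z
  have huz : u z = 0 := hS z hz
  have hlo : ∀ᶠ w in nhds z, ‖u w - u z - L (w - z)‖ ≤ c/4 * ‖w - z‖ :=
    hL.isLittleO.def (by positivity)
  obtain ⟨r₀, hr₀pos, hr₀⟩ : ∃ r₀ > 0, ∀ w ∈ closedBall z r₀,
      |u w - L (w - z)| ≤ c/4 * ‖w - z‖ := by
    rcases Metric.eventually_nhds_iff_ball.1 hlo with ⟨ε, hε, hball⟩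
    refine ⟨ε/2, by positivity, fun w hw => ?_⟩
    have hw' : w ∈ ball z ε := lt_of_le_of_lt (mem_closedBall.1 hw) (by linarith)
    have := hball w hw'
    rw [huz, sub_zero] at this
    simpa [Real.norm_eq_abs] using this
  -- points of the (shifted) cone near z are not in S
  have hkey : ∀ w, w - z ∈ A → w ≠ z → w ∈ closedBall z r₀ → w ∉ S := by
    intro w hwA hwz hwr hwS
    have h1 := hLlower _ hwA
    have h2 := hr₀ w hwr
    rw [hS w hwS, zero_sub, abs_neg] at h2
    have h3 : (0:ℝ) < ‖w - z‖ := by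
      rw [norm_pos_iff, sub_ne_zero]; exact hwz
    nlinarith
  -- a small ball inside the (truncated) cone
  have hnv : ‖(2:ℝ)⁻¹ • v'‖ = 2⁻¹ := by
    rw [norm_smul, hv'norm, Real.norm_eq_abs]; norm_num
  have hball_sub : ball ((2:ℝ)⁻¹ • v') (δ/16) ⊆ A ∩ closedBall 0 1 := by
    intro h hhb
    have hd1 : ‖h - (2:ℝ)⁻¹ • v'‖ < δ/16 := by
      rw [mem_ball, dist_eq_norm] at hhb; exact hhb
    have hn2 : |‖h‖ - 2⁻¹| < δ/16 := by
      have := abs_norm_sub_norm_le h ((2:ℝ)⁻¹ • v')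
      rw [hnv] at this
      linarith
    have hnh : (1:ℝ)/4 ≤ ‖h‖ := by
      have h16 : δ/16 ≤ 1/16 := by linarith
      have := abs_lt.1 hn2
      linarith [this.1]
    constructor
    · show ‖h - ‖h‖ • v'‖ ≤ δ * ‖h‖
      have split : h - ‖h‖ • v' = (h - (2:ℝ)⁻¹ • v') + ((2:ℝ)⁻¹ - ‖h‖) • v' := by
        module
      have b3 : ‖((2:ℝ)⁻¹ - ‖h‖) • v'‖ < δ/16 := by
        rw [norm_smul, hv'norm, mul_one, Real.norm_eq_abs, abs_sub_comm]; exact hn2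
      calc ‖h - ‖h‖ • v'‖ ≤ ‖h - (2:ℝ)⁻¹ • v'‖ + ‖((2:ℝ)⁻¹ - ‖h‖) • v'‖ := by
            rw [split]; exact norm_add_le _ _
        _ ≤ δ/8 := by linarith
        _ ≤ δ * ‖h‖ := by nlinarith
    · rw [mem_closedBall_zero_iff]
      have := abs_lt.1 hn2
      have h16 : δ/16 ≤ 1/16 := by linarith
      linarith [this.2]
  set m := volume (A ∩ closedBall (0:ℂ) 1) with hm
  have hmpos : 0 < m :=
    lt_of_lt_of_le (measure_ball_pos _ _ (by positivity)) (measure_mono hball_sub)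
  set V := volume (ball (0:ℂ) 1) with hV
  have hVpos : 0 < V := measure_ball_pos _ _ one_pos
  have hVlt : V < ⊤ := measure_ball_lt_top
  have hmV : m ≤ V := by
    rw [hV, ← Measure.addHaar_closedBall_eq_addHaar_ball]
    exact measure_mono inter_subset_right
  -- scaling of the truncated cone
  have hscale : ∀ r : ℝ, 0 < r →
      volume (A ∩ closedBall (0:ℂ) r) = ENNReal.ofReal (r^2) * m := by
    intro r hr
    have hset : A ∩ closedBall (0:ℂ) r = r • (A ∩ closedBall (0:ℂ) 1) := by
      ext h
      simp only [Set.mem_inter_iff, mem_closedBall_zero_iff, Set.mem_smul_set]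
      constructor
      · rintro ⟨hA, hn⟩
        refine ⟨r⁻¹ • h, ⟨cone_smul v' δ (by positivity) hA, ?_⟩, ?_⟩
        · rw [norm_smul, norm_inv, Real.norm_eq_abs, abs_of_pos hr]
          have h5 : r⁻¹ * ‖h‖ ≤ r⁻¹ * r := mul_le_mul_of_nonneg_left hn (by positivity)
          rwa [inv_mul_cancel₀ hr.ne'] at h5
        · rw [smul_inv_smul₀ hr.ne']
      · rintro ⟨y, ⟨hyA, hy1⟩, rfl⟩
        refine ⟨cone_smul v' δ hr.le hyA, ?_⟩
        rw [norm_smul, Real.norm_eq_abs, abs_of_pos hr]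
        nlinarith [norm_nonneg y]
    rw [hset, Measure.addHaar_smul, Complex.finrank_real_complex]
    congr 1
    rw [abs_of_nonneg (by positivity)]
  -- main density estimate
  have hmain : ∀ r : ℝ, 0 < r → r ≤ r₀ →
      volume (S ∩ closedBall z r) / volume (closedBall z r) ≤ (V - m)/V := by
    intro r hr hrr₀
    set W : Set ℂ := (fun w => w - z) ⁻¹' (A ∩ closedBall 0 r) \ {z} with hWdef
    have hWm : MeasurableSet W :=
      ((hAclosed.measurableSet.inter measurableSet_closedBall).preimage
        (by fun_prop)).diff (measurableSet_singleton z)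
    have hdisj : Disjoint (S ∩ closedBall z r) W := by
      rw [Set.disjoint_left]
      rintro w ⟨hwS, hwB⟩ ⟨⟨hwA, hwr⟩, hwz⟩
      exact hkey w hwA (by simpa using hwz)
        (closedBall_subset_closedBall hrr₀ hwB) hwS
    have hWsub : W ⊆ closedBall z r := by
      rintro w ⟨⟨_, hwr⟩, _⟩
      rw [mem_closedBall_zero_iff] at hwr
      rw [mem_closedBall, dist_eq_norm]
      exact hwr
    have hunion : volume (S ∩ closedBall z r) + volume W ≤ volume (closedBall z r) := by
      rw [← measure_union hdisj hWm]
      exact measure_mono (Set.union_subset Set.inter_subset_right hWsub)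
    have htrans : volume ((fun w : ℂ => w - z) ⁻¹' (A ∩ closedBall 0 r))
        = volume (A ∩ closedBall (0:ℂ) r) := by
      have heq : (fun w : ℂ => w - z) = fun w => w + (-z) := by
        funext w; ring
      rw [heq, measure_preimage_add_right]
    have hWvol : volume W = ENNReal.ofReal (r^2) * m := by
      rw [hWdef, measure_diff_null (measure_singleton z), htrans, hscale r hr]
    have hB : volume (closedBall z r) = ENNReal.ofReal (r^2) * V := by
      rw [Measure.addHaar_closedBall volume z hr.le, Complex.finrank_real_complex, hV]
    rw [hB]
    have h1 : volume (S ∩ closedBall z r) ≤ ENNReal.ofReal (r^2) * (V - m) := by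
      rw [hWvol, hB] at hunion
      have h2 : ENNReal.ofReal (r^2) * V - ENNReal.ofReal (r^2) * m
          = ENNReal.ofReal (r^2) * (V - m) := by
        rw [ENNReal.mul_sub (fun _ _ => ENNReal.ofReal_ne_top)]
      rw [← h2]
      have hfin : ENNReal.ofReal (r^2) * m ≠ ⊤ :=
        ENNReal.mul_ne_top ENNReal.ofReal_ne_top (lt_of_le_of_lt hmV hVlt).ne
      exact ENNReal.le_sub_of_add_le_right hfin hunion
    calc volume (S ∩ closedBall z r) / (ENNReal.ofReal (r^2) * V)
        ≤ (ENNReal.ofReal (r^2) * (V - m)) / (ENNReal.ofReal (r^2) * V) :=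
          ENNReal.div_le_div_right h1 _
      _ = (V - m)/V := by
          rw [ENNReal.mul_div_mul_left _ _ (ENNReal.ofReal_pos.2 (by positivity)).ne'
            ENNReal.ofReal_ne_top]
  have hlim : (1:ENNReal) ≤ (V - m)/V := by
    apply le_of_tendsto hd
    filter_upwards [Ioc_mem_nhdsGT_of_mem ⟨le_refl (0:ℝ), hr₀pos⟩] with r hr
    exact hmain r hr.1 hr.2
  have hlt : (V - m)/V < 1 := by
    rw [ENNReal.div_lt_iff (Or.inl hVpos.ne') (Or.inl hVlt.ne)]
    rw [one_mul]
    exact ENNReal.sub_lt_self hVlt.ne hVpos.ne' hmpos.ne'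
  exact absurd (lt_of_le_of_lt hlim hlt) (lt_irrefl _)


noncomputable def holo (u : ℂ → ℝ) (z : ℂ) : ℂ :=
  ((fderiv ℝ u z 1 : ℝ) : ℂ) - Complex.I * ((fderiv ℝ u z Complex.I : ℝ) : ℂ)

lemma holo_differentiableOn {u : ℂ → ℝ} {U : Set ℂ} (hU : IsOpen U)
    (hu : IsHarmonicOn u U) : DifferentiableOn ℂ (holo u) U := by
  intro z hz
  apply DifferentiableAt.differentiableWithinAt
  have hCD : ContDiffAt ℝ 2 u z := (hu.1 z hz).contDiffAt (hU.mem_nhds hz)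
  have hB : DifferentiableAt ℝ (fderiv ℝ u) z :=
    (hCD.fderiv_right (le_refl 2)).differentiableAt one_ne_zero
  set B := fderiv ℝ (fderiv ℝ u) z with hBdef
  have hBB : HasFDerivAt (fderiv ℝ u) B z := hB.hasFDerivAt
  have hsymm : ∀ v w, B v w = B w v := hCD.isSymmSndFDerivAt (by simp [minSmoothness_of_isRCLikeNormedField])
  have hP : ∀ e : ℂ, HasFDerivAt (fun w => fderiv ℝ u w e)
      ((ContinuousLinearMap.apply ℝ ℝ e).comp B) z :=
    fun e => (ContinuousLinearMap.apply ℝ ℝ e).hasFDerivAt.comp z hBB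
  have hlap : B 1 1 + B Complex.I Complex.I = 0 := by
    have h1 := (hP 1).fderiv
    have h2 := (hP Complex.I).fderiv
    have h3 := hu.2 z hz
    rw [laplacian, h1, h2] at h3
    simpa using h3
  have hre : HasFDerivAt (fun w => ((fderiv ℝ u w 1 : ℝ) : ℂ))
      (Complex.ofRealCLM.comp ((ContinuousLinearMap.apply ℝ ℝ 1).comp B)) z :=
    Complex.ofRealCLM.hasFDerivAt.comp z (hP 1)
  have him : HasFDerivAt (fun w => Complex.I * ((fderiv ℝ u w Complex.I : ℝ) : ℂ))
      (Complex.I • (Complex.ofRealCLM.comp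
        ((ContinuousLinearMap.apply ℝ ℝ Complex.I).comp B))) z :=
    (Complex.ofRealCLM.hasFDerivAt.comp z (hP Complex.I)).const_mul Complex.I
  have hholD : HasFDerivAt (holo u)
      (Complex.ofRealCLM.comp ((ContinuousLinearMap.apply ℝ ℝ 1).comp B) -
        Complex.I • (Complex.ofRealCLM.comp
          ((ContinuousLinearMap.apply ℝ ℝ Complex.I).comp B))) z := hre.sub him
  set c : ℂ := ((B 1 1 : ℝ) : ℂ) - Complex.I * ((B 1 Complex.I : ℝ) : ℂ) with hcdef
  set M : ℂ →L[ℂ] ℂ := c • ContinuousLinearMap.id ℂ ℂ with hMdef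
  have hMeq : M.restrictScalars ℝ
      = Complex.ofRealCLM.comp ((ContinuousLinearMap.apply ℝ ℝ 1).comp B) -
        Complex.I • (Complex.ofRealCLM.comp
          ((ContinuousLinearMap.apply ℝ ℝ Complex.I).comp B)) := by
    apply ContinuousLinearMap.ext
    intro h
    have hdec : (h : ℂ) = (h.re : ℝ) • (1:ℂ) + (h.im : ℝ) • Complex.I := by
      simp [Complex.real_smul, Complex.re_add_im]
    have hBdec : B h = (h.re : ℝ) • B 1 + (h.im : ℝ) • B Complex.I := by
      conv_lhs => rw [hdec]
      rw [map_add, B.map_smul, B.map_smul]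
    have hBh1 : B h 1 = h.re * (B 1 1) + h.im * (B 1 Complex.I) := by
      rw [hBdec]
      simp [hsymm Complex.I 1]
    have hBhI : B h Complex.I = h.re * (B 1 Complex.I) - h.im * (B 1 1) := by
      rw [hBdec]
      simp only [ContinuousLinearMap.add_apply, ContinuousLinearMap.coe_smul',
        Pi.smul_apply, smul_eq_mul]
      have : B Complex.I Complex.I = -(B 1 1) := by linarith
      rw [this]; ring
    show c * h = _
    simp only [ContinuousLinearMap.sub_apply, ContinuousLinearMap.coe_comp',
      Function.comp_apply, ContinuousLinearMap.coe_smul', Pi.smul_apply,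
      Complex.ofRealCLM_apply, ContinuousLinearMap.apply_apply, smul_eq_mul]
    rw [hBh1, hBhI, hcdef]
    conv_lhs => rw [← Complex.re_add_im h]
    push_cast
    linear_combination (-(h.im:ℂ) * ((B 1 Complex.I : ℝ) : ℂ)) * Complex.I_sq
  exact (hasFDerivAt_of_restrictScalars ℝ hholD hMeq).differentiableAt


/-- If a harmonic function on a connected open set `U ⊆ ℂ` vanishes on a set
of positive two-dimensional Lebesgue measure, it vanishes identically on `U`. -/
theorem harmonic_eq_zero_of_pos_measure_zero_set (U : Set ℂ) (hU : IsOpen U)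
    (hUc : IsConnected U) (u : ℂ → ℝ) (hu : IsHarmonicOn u U)
    (hpos : 0 < volume {z : ℂ | z ∈ U ∧ u z = 0}) :
    ∀ z ∈ U, u z = 0 := by
  classical
  set S := {z : ℂ | z ∈ U ∧ u z = 0} with hSdef
  have hSU : S ⊆ U := fun z hz => hz.1
  have hSzero : ∀ w ∈ S, u w = 0 := fun w hw => hw.2
  have hucont : ContinuousOn u U := hu.1.continuousOn
  have hWopen : IsOpen (U ∩ u ⁻¹' ({0}ᶜ)) :=
    hucont.isOpen_inter_preimage hU isOpen_compl_singleton
  have hSmeas : MeasurableSet S := by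
    have : S = U \ (U ∩ u ⁻¹' ({0}ᶜ)) := by
      ext w; simp only [hSdef, mem_setOf_eq, mem_diff, mem_inter_iff, mem_preimage,
        mem_compl_iff, mem_singleton_iff]
      tauto
    rw [this]
    exact hU.measurableSet.diff hWopen.measurableSet
  have hdiff : ∀ w ∈ U, HasFDerivAt u (fderiv ℝ u w) w := fun w hw =>
    (((hu.1 w hw).contDiffAt (hU.mem_nhds hw)).differentiableAt two_ne_zero).hasFDerivAt
  -- density points of S
  have hdens := Besicovitch.ae_tendsto_measure_inter_div_of_measurableSet volume hSmeas
  set D := {x : ℂ | Tendsto (fun r => volume (S ∩ closedBall x r) / volume (closedBall x r))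
    (𝓝[>] 0) (𝓝 (S.indicator 1 x))} with hDdef
  have hDc : volume Dᶜ = 0 := by
    rw [hDdef, Set.compl_setOf]
    exact ae_iff.1 hdens
  set S' := S ∩ D with hS'def
  have hS'vol : volume S' = volume S := by
    have : S' = S \ Dᶜ := by rw [hS'def, diff_compl]
    rw [this, measure_diff_null hDc]
  -- gradient vanishes on S'
  have hgrad : ∀ x ∈ S', fderiv ℝ u x = 0 := by
    rintro x ⟨hxS, hxD⟩
    have hxU : x ∈ U := hSU hxS
    have hind : S.indicator (1 : ℂ → ENNReal) x = 1 := indicator_of_mem hxS 1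
    rw [hDdef] at hxD
    simp only [mem_setOf_eq, hind] at hxD
    exact fderiv_eq_zero_of_density (hdiff x hxU) hxS hSzero hSmeas hxD
  have hholo0 : ∀ x ∈ S', holo u x = 0 := by
    intro x hx
    rw [holo, hgrad x hx]
    simp
  -- pick an accumulation point of S'
  have hS'null : NullMeasurableSet S' volume := by
    apply hSmeas.nullMeasurableSet.congr
    rw [Filter.eventuallyEq_set]
    have : ∀ x ∈ D, (x ∈ S ↔ x ∈ S') := fun x hx => by
      simp [hS'def, hx]
    filter_upwards [measure_eq_zero_iff_ae_notMem.1 hDc] with x hx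
    simp [hS'def, not_not.1 hx]
  have hres : (volume.restrict S') ≠ 0 := by
    intro hcon
    have : volume S' = 0 := by
      rw [← Measure.restrict_apply_univ, hcon]; simp
    rw [hS'vol] at this
    exact hpos.ne' this
  have := Besicovitch.ae_tendsto_measure_inter_div volume S'
  have hne : (ae (volume.restrict S')).NeBot := ae_neBot.2 hres
  obtain ⟨z₀, hz₀S', hz₀d⟩ := ((ae_restrict_mem₀ hS'null).and this).exists
  have hz₀U : z₀ ∈ U := hSU hz₀S'.1
  -- z₀ is an accumulation point of the zero set of `holo u`
  have hacc : ∀ ε > 0, ∃ w ∈ S', w ≠ z₀ ∧ dist w z₀ < ε := by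
    intro ε hε
    by_contra hcon
    push_neg at hcon
    have hsub : ∀ r, 0 < r → r < ε → S' ∩ closedBall z₀ r ⊆ {z₀} := by
      intro r hr hrε w ⟨hwS', hwB⟩
      by_contra hwz
      exact absurd (lt_of_le_of_lt (mem_closedBall.1 hwB) hrε) (not_lt.2 (hcon w hwS' hwz))
    have hev : ∀ᶠ r in 𝓝[>] (0:ℝ),
        volume (S' ∩ closedBall z₀ r) / volume (closedBall z₀ r) = 0 := by
      filter_upwards [Ioo_mem_nhdsGT_of_mem ⟨le_refl (0:ℝ), hε⟩] with r hr
      have h0 : volume (S' ∩ closedBall z₀ r) = 0 :=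
        le_antisymm (le_trans (measure_mono (hsub r hr.1 hr.2)) (by simp)) zero_le
      rw [h0, ENNReal.zero_div]
    have h0 : Tendsto (fun _ : ℝ => (0:ENNReal)) (𝓝[>] (0:ℝ)) (𝓝 1) := hz₀d.congr' hev
    have h1 : (1:ENNReal) = 0 := tendsto_nhds_unique h0 tendsto_const_nhds
    simp at h1
  have hfreq : ∃ᶠ w in 𝓝[≠] z₀, holo u w = 0 := by
    rw [Filter.frequently_iff]
    intro V hV
    rw [Metric.mem_nhdsWithin_iff] at hV
    obtain ⟨ε, hε, hball⟩ := hV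
    obtain ⟨w, hwS', hwz, hwd⟩ := hacc ε hε
    exact ⟨w, hball ⟨mem_ball.2 hwd, hwz⟩, hholo0 w hwS'⟩
  -- identity theorem: `holo u` vanishes on all of `U`
  have han : AnalyticOnNhd ℂ (holo u) U :=
    (holo_differentiableOn hU hu).analyticOnNhd hU
  have hzero : EqOn (holo u) 0 U :=
    han.eqOn_zero_of_preconnected_of_frequently_eq_zero hUc.isPreconnected hz₀U hfreq
  -- hence the gradient of `u` vanishes on `U`
  have hgradU : ∀ z ∈ U, fderiv ℝ u z = 0 := by
    intro z hz
    have h0 := hzero hz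
    rw [holo] at h0
    have hre : fderiv ℝ u z 1 = 0 := by
      have := congrArg Complex.re h0
      simpa using this
    have him : fderiv ℝ u z Complex.I = 0 := by
      have := congrArg Complex.im h0
      simpa using this
    apply ContinuousLinearMap.ext
    intro h
    have hdec : (h : ℂ) = (h.re : ℝ) • (1:ℂ) + (h.im : ℝ) • Complex.I := by
      simp [Complex.real_smul, Complex.re_add_im]
    rw [hdec]
    rw [map_add, (fderiv ℝ u z).map_smul, (fderiv ℝ u z).map_smul, hre, him]
    simp
  -- `u` is locally constant on `U`, hence its zero set is open
  have hVopen : IsOpen S := by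
    rw [Metric.isOpen_iff]
    rintro z ⟨hzU, hz0⟩
    obtain ⟨ε, hε, hballU⟩ := Metric.isOpen_iff.1 hU z hzU
    refine ⟨ε, hε, fun w hw => ⟨hballU hw, ?_⟩⟩
    have hconv : Convex ℝ (ball z ε) := convex_ball z ε
    have hdif : DifferentiableOn ℝ u (ball z ε) :=
      ((hu.1.mono hballU).differentiableOn two_ne_zero)
    have hfd : ∀ x ∈ ball z ε, fderivWithin ℝ u (ball z ε) x = 0 := by
      intro x hx
      rw [fderivWithin_of_isOpen isOpen_ball hx]
      exact hgradU x (hballU hx)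
    have := hconv.is_const_of_fderivWithin_eq_zero hdif hfd hw (mem_ball_self hε)
    rw [this, hz0]
  -- clopen argument on the connected set `U`
  have hsubset : U ⊆ S ∪ (U ∩ u ⁻¹' ({0}ᶜ)) := by
    intro z hz
    by_cases h0 : u z = 0
    · exact Or.inl ⟨hz, h0⟩
    · exact Or.inr ⟨hz, h0⟩
  have hdisj : Disjoint S (U ∩ u ⁻¹' ({0}ᶜ)) := by
    rw [Set.disjoint_left]
    rintro w ⟨_, hw0⟩ ⟨_, hwne⟩
    exact hwne hw0
  have hfinal : U ⊆ S :=
    hUc.isPreconnected.subset_left_of_subset_union hVopen hWopen hdisj hsubset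
      ⟨z₀, hz₀U, hz₀S'.1⟩
  exact fun z hz => (hfinal hz).2
end

section
/- Let G₁, G₂, G₃ be three pairwise disjoint nonempty connected open subsets of ℂ. Then the set of points of ℂ that are accessible from all three of G₁, G₂, G₃ contains at most two points. -/
/-- A point `p` is accessible from an open set `G ⊆ ℂ` if `p ∉ G` and there is
a continuous curve `γ : [0,1] → ℂ` with `γ(t) ∈ G` for `t ∈ [0,1)` and
`γ(1) = p`. -/
def Accessible (G : Set ℂ) (p : ℂ) : Prop :=
  p ∉ G ∧ ∃ γ : ℝ → ℂ, ContinuousOn γ (Set.Icc 0 1) ∧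
    (∀ t ∈ Set.Ico (0:ℝ) 1, γ t ∈ G) ∧ γ 1 = p

open Set Complex

namespace AccessProof

/-- A continuous nonvanishing path on `[0,1]`. -/
def Nice (u : ℝ → ℂ) : Prop :=
  ContinuousOn u (Icc 0 1) ∧ ∀ t ∈ Icc (0:ℝ) 1, u t ≠ 0

/-- `ℓ` is a continuous logarithm of `u` on `[0,1]`. -/
def IsLift (u ℓ : ℝ → ℂ) : Prop :=
  ContinuousOn ℓ (Icc 0 1) ∧ ∀ t ∈ Icc (0:ℝ) 1, Complex.exp (ℓ t) = u t

theorem ball_mem_slitPlane {z : ℂ} (h : ‖z - 1‖ < 1) : z ∈ Complex.slitPlane := by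
  refine Or.inl ?_
  have h1 : (1 - z).re ≤ ‖1 - z‖ := Complex.re_le_norm _
  have h2 : ‖1 - z‖ = ‖z - 1‖ := by rw [← neg_sub]; exact (norm_neg _)
  simp only [Complex.sub_re, Complex.one_re] at h1
  rw [h2] at h1
  linarith

theorem exists_lift {u : ℝ → ℂ} (h : Nice u) : ∃ ℓ, IsLift u ℓ := by
  obtain ⟨hc, hz⟩ := h
  obtain ⟨t₀, ht₀, hmin⟩ := isCompact_Icc.exists_isMinOn (f := fun t => ‖u t‖)
    ⟨0, by norm_num⟩ (continuous_norm.comp_continuousOn hc)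
  set m : ℝ := ‖u t₀‖ with hm
  have hmpos : 0 < m := by
    have := hz t₀ ht₀
    simpa [hm] using (norm_pos_iff.mpr this)
  have hmle : ∀ t ∈ Icc (0:ℝ) 1, m ≤ ‖u t‖ := fun t ht => hmin ht
  have huc := isCompact_Icc.uniformContinuousOn_of_continuous hc
  rw [Metric.uniformContinuousOn_iff] at huc
  obtain ⟨δ, hδ, hucd⟩ := huc m hmpos
  have key : ∀ n : ℕ, ∃ ℓ : ℝ → ℂ, ContinuousOn ℓ (Icc 0 (min (n * (δ/2)) 1)) ∧
      ∀ t ∈ Icc (0:ℝ) (min (n * (δ/2)) 1), Complex.exp (ℓ t) = u t := by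
    intro n
    induction n with
    | zero =>
      refine ⟨fun _ => Complex.log (u 0), continuousOn_const, ?_⟩
      intro t ht
      simp only [Nat.cast_zero, zero_mul, min_eq_left (by norm_num : (0:ℝ) ≤ 1)] at ht
      have : t = 0 := le_antisymm ht.2 ht.1
      rw [this, Complex.exp_log (hz 0 (by norm_num))]
    | succ n ih =>
      obtain ⟨ℓ, hℓc, hℓe⟩ := ih
      set a : ℝ := min ((n:ℝ) * (δ/2)) 1 with ha
      set b : ℝ := min (((n:ℕ)+1 : ℕ) * (δ/2)) 1 with hb
      have ha0 : 0 ≤ a := le_min (by positivity) (by norm_num)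
      have ha1 : a ≤ 1 := min_le_right _ _
      have hb1 : b ≤ 1 := min_le_right _ _
      have haI : a ∈ Icc (0:ℝ) 1 := ⟨ha0, ha1⟩
      have hab : a ≤ b := by
        refine le_min ?_ ha1
        calc a ≤ (n:ℝ) * (δ/2) := min_le_left _ _
          _ ≤ (((n:ℕ)+1 : ℕ):ℝ) * (δ/2) := by push_cast; nlinarith
      have hba : b ≤ a + δ/2 := by
        rcases le_total ((n:ℝ) * (δ/2)) 1 with h1 | h1
        · have haa : a = (n:ℝ) * (δ/2) := min_eq_left h1
          have : b ≤ (((n:ℕ)+1 : ℕ):ℝ) * (δ/2) := min_le_left _ _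
          rw [haa]; push_cast at this ⊢; linarith
        · have haa : a = 1 := min_eq_right h1
          rw [haa]; linarith
      -- key facts for points in [0,b]
      have hmaxI : ∀ s ∈ Icc (0:ℝ) b, max s a ∈ Icc (0:ℝ) 1 :=
        fun s hs => ⟨le_trans ha0 (le_max_right _ _), max_le (le_trans hs.2 hb1) ha1⟩
      have hminI : ∀ s ∈ Icc (0:ℝ) b, min s a ∈ Icc (0:ℝ) a :=
        fun s hs => ⟨le_min hs.1 ha0, min_le_right _ _⟩
      have hclose : ∀ s ∈ Icc (0:ℝ) b, dist (u (max s a)) (u a) < m := by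
        intro s hs
        refine hucd _ (hmaxI s hs) a haI ?_
        have h1 : a ≤ max s a := le_max_right _ _
        have h2 : max s a ≤ b := max_le hs.2 hab
        rw [Real.dist_eq, abs_sub_lt_iff]
        constructor <;> linarith
      have hratio : ∀ s ∈ Icc (0:ℝ) b, u (max s a) / u a ∈ Complex.slitPlane := by
        intro s hs
        apply ball_mem_slitPlane
        have hua : u a ≠ 0 := hz a haI
        have : u (max s a) / u a - 1 = (u (max s a) - u a) / u a := by
          field_simp
        rw [this, norm_div]
        have h1 : ‖u (max s a) - u a‖ < m := by
          simpa [Complex.dist_eq] using hclose s hs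
        have h2 : m ≤ ‖u a‖ := hmle a haI
        have h3 : 0 < ‖u a‖ := norm_pos_iff.mpr hua
        rw [div_lt_one h3]
        linarith
      have hrne : ∀ s ∈ Icc (0:ℝ) b, u (max s a) / u a ≠ 0 :=
        fun s hs => Complex.slitPlane_ne_zero (hratio s hs)
      refine ⟨fun s => ℓ (min s a) + Complex.log (u (max s a) / u a), ?_, ?_⟩
      · apply ContinuousOn.add
        · refine hℓc.comp (continuous_id.min continuous_const).continuousOn ?_
          exact fun s hs => hminI s hs
        · intro s hs
          refine ContinuousWithinAt.clog ?_ (hratio s hs)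
          refine ContinuousWithinAt.div ?_ continuousWithinAt_const (hz a haI)
          refine (hc.comp (continuous_id.max continuous_const).continuousOn ?_) s hs
          exact fun x hx => hmaxI x hx
      · intro s hs
        rw [Complex.exp_add, Complex.exp_log (hrne s hs)]
        have hsmem : min s a ∈ Icc (0:ℝ) a := hminI s hs
        rw [hℓe _ hsmem]
        rcases le_total s a with hsa | hsa
        · rw [min_eq_left hsa, max_eq_right hsa, div_self (hz a haI), mul_one]
        · rw [min_eq_right hsa, max_eq_left hsa]
          field_simp [hz a haI]
  obtain ⟨n, hn⟩ := exists_nat_ge (2 / δ * 1)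
  obtain ⟨ℓ, h1, h2⟩ := key n
  have hmin1 : min ((n:ℝ) * (δ/2)) 1 = 1 := by
    refine min_eq_right ?_
    have h2d : 2/δ ≤ (n:ℝ) := by simpa using hn
    rw [div_le_iff₀ hδ] at h2d
    nlinarith
  rw [hmin1] at h1 h2
  exact ⟨ℓ, h1, h2⟩

/-- On a preconnected set, a continuous function with values in `2πℤ` is constant. -/
theorem eq_of_int_valued {s : Set ℝ} (hs : IsPreconnected s) {f : ℝ → ℝ}
    (hf : ContinuousOn f s) (hint : ∀ x ∈ s, ∃ k : ℤ, f x = 2 * Real.pi * k)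
    {x y : ℝ} (hx : x ∈ s) (hy : y ∈ s) : f x = f y := by
  obtain ⟨kx, hkx⟩ := hint x hx
  obtain ⟨ky, hky⟩ := hint y hy
  have hpi := Real.pi_pos
  rcases lt_trichotomy kx ky with hlt | heq | hgt
  · exfalso
    have h1 : f x ≤ 2 * Real.pi * kx + Real.pi := by rw [hkx]; linarith
    have h2 : 2 * Real.pi * kx + Real.pi ≤ f y := by
      rw [hky]
      have : (kx : ℝ) + 1 ≤ ky := by exact_mod_cast hlt
      nlinarith
    obtain ⟨z, hz, hfz⟩ := hs.intermediate_value₂ hx hy hf continuousOn_const h1 h2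
    obtain ⟨kz, hkz⟩ := hint z hz
    rw [hkz] at hfz
    have hp : (2*(kz:ℝ))*Real.pi = (2*(kx:ℝ)+1)*Real.pi := by linarith
    have h2 := mul_right_cancel₀ Real.pi_ne_zero hp
    have : (2 * kz : ℤ) = 2 * kx + 1 := by exact_mod_cast h2
    omega
  · rw [hkx, hky, heq]
  · exfalso
    have h1 : f y ≤ 2 * Real.pi * ky + Real.pi := by rw [hky]; linarith
    have h2 : 2 * Real.pi * ky + Real.pi ≤ f x := by
      rw [hkx]
      have : (ky : ℝ) + 1 ≤ kx := by exact_mod_cast hgt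
      nlinarith
    obtain ⟨z, hz, hfz⟩ := hs.intermediate_value₂ hy hx hf continuousOn_const h1 h2
    obtain ⟨kz, hkz⟩ := hint z hz
    rw [hkz] at hfz
    have hp : (2*(kz:ℝ))*Real.pi = (2*(ky:ℝ)+1)*Real.pi := by linarith
    have h2 := mul_right_cancel₀ Real.pi_ne_zero hp
    have : (2 * kz : ℤ) = 2 * ky + 1 := by exact_mod_cast h2
    omega

/-- Difference of two lifts of the same path has constant imaginary part difference. -/
theorem lift_diff_im {u ℓ ℓ' : ℝ → ℂ} (h : IsLift u ℓ) (h' : IsLift u ℓ')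
    {x y : ℝ} (hx : x ∈ Icc (0:ℝ) 1) (hy : y ∈ Icc (0:ℝ) 1) :
    (ℓ x - ℓ' x).im = (ℓ y - ℓ' y).im := by
  have hint : ∀ t ∈ Icc (0:ℝ) 1, ∃ k : ℤ, (ℓ t - ℓ' t).im = 2 * Real.pi * k := by
    intro t ht
    have he : Complex.exp (ℓ t - ℓ' t) = 1 := by
      rw [Complex.exp_sub, h.2 t ht, h'.2 t ht, div_self]
      rw [← h.2 t ht]; exact Complex.exp_ne_zero _
    obtain ⟨n, hn⟩ := Complex.exp_eq_one_iff.mp he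
    refine ⟨n, ?_⟩
    rw [hn]
    simp [Complex.mul_im, Complex.mul_re]
    ring
  have hcont : ContinuousOn (fun t => (ℓ t - ℓ' t).im) (Icc 0 1) :=
    (Complex.continuous_im.comp_continuousOn (h.1.sub h'.1))
  exact eq_of_int_valued isPreconnected_Icc hcont hint hx hy

open scoped Classical in
noncomputable def V (u : ℝ → ℂ) : ℝ :=
  if h : ∃ ℓ, IsLift u ℓ then ((h.choose 1) - (h.choose 0)).im else 0

theorem V_eq_lift {u ℓ : ℝ → ℂ} (h : IsLift u ℓ) : V u = (ℓ 1 - ℓ 0).im := by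
  have hex : ∃ ℓ', IsLift u ℓ' := ⟨ℓ, h⟩
  rw [V]
  rw [dif_pos hex]
  have hL : IsLift u hex.choose := hex.choose_spec
  have h10 : (0:ℝ) ∈ Icc (0:ℝ) 1 := by norm_num
  have h11 : (1:ℝ) ∈ Icc (0:ℝ) 1 := by norm_num
  have := lift_diff_im hL h h11 h10
  simp only [Complex.sub_im] at this ⊢
  linarith

theorem V_exp {u : ℝ → ℂ} (h : Nice u) :
    ∃ s : ℝ, 0 < s ∧ u 1 = s * Complex.exp ((V u : ℝ) * Complex.I) * u 0 := by
  obtain ⟨ℓ, hℓ⟩ := exists_lift h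
  refine ⟨Real.exp ((ℓ 1 - ℓ 0).re), Real.exp_pos _, ?_⟩
  have h10 : (0:ℝ) ∈ Icc (0:ℝ) 1 := by norm_num
  have h11 : (1:ℝ) ∈ Icc (0:ℝ) 1 := by norm_num
  rw [V_eq_lift hℓ, ← hℓ.2 1 h11, ← hℓ.2 0 h10]
  have hdecomp : ℓ 1 = (((ℓ 1 - ℓ 0).re : ℝ) : ℂ) + ((ℓ 1 - ℓ 0).im : ℝ) * Complex.I + ℓ 0 := by
    rw [Complex.re_add_im]
    ring
  calc Complex.exp (ℓ 1) = Complex.exp ((((ℓ 1 - ℓ 0).re : ℝ) : ℂ))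
        * Complex.exp (((ℓ 1 - ℓ 0).im : ℝ) * Complex.I) * Complex.exp (ℓ 0) := by
        rw [← Complex.exp_add, ← Complex.exp_add, ← hdecomp]
    _ = _ := by rw [Complex.ofReal_exp]
  
theorem V_neg {u : ℝ → ℂ} (h : Nice u) : V (fun t => -(u t)) = V u := by
  obtain ⟨ℓ, hℓ⟩ := exists_lift h
  have hlift : IsLift (fun t => -(u t)) (fun t => ℓ t + Real.pi * Complex.I) := by
    refine ⟨hℓ.1.add continuousOn_const, ?_⟩
    intro t ht
    rw [Complex.exp_add, hℓ.2 t ht, Complex.exp_pi_mul_I]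
    ring
  rw [V_eq_lift hlift, V_eq_lift hℓ]
  simp

theorem angle_aux {s T : ℝ} (hs : 0 < s) {c : ℝ} (hc : c = 1 ∨ c = -1)
    (h : (s : ℂ) * Complex.exp ((T:ℝ) * Complex.I) = (c:ℝ)) :
    ∃ n : ℤ, T = n * Real.pi ∧ Real.cos T = c / s := by
  have hexp : Complex.exp ((T:ℝ) * Complex.I) = (Real.cos T : ℝ) + (Real.sin T : ℝ) * Complex.I := by
    rw [show ((T:ℝ) : ℂ) * Complex.I = (T : ℂ) * Complex.I by norm_num, Complex.exp_mul_I]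
    rw [← Complex.ofReal_cos, ← Complex.ofReal_sin]
  rw [hexp] at h
  have him : s * Real.sin T = 0 := by
    have := congrArg Complex.im h
    simpa [Complex.mul_im, Complex.add_im, Complex.ofReal_im, Complex.mul_re, -Complex.ofReal_cos, -Complex.ofReal_sin] using this
  have hre : s * Real.cos T = c := by
    have := congrArg Complex.re h
    simpa [Complex.mul_re, Complex.add_re, Complex.ofReal_re, -Complex.ofReal_cos, -Complex.ofReal_sin] using this
  have hsin : Real.sin T = 0 := by
    rcases mul_eq_zero.mp him with h1 | h1
    · exact absurd h1 (ne_of_gt hs)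
    · exact h1
  obtain ⟨n, hn⟩ := Real.sin_eq_zero_iff.mp hsin
  exact ⟨n, hn.symm, by rw [eq_div_iff (ne_of_gt hs)]; linarith [hre]⟩

theorem angle_int {s T : ℝ} {z : ℂ} (hs : 0 < s) (hz : z ≠ 0)
    (h : z = (s:ℝ) * Complex.exp ((T:ℝ) * Complex.I) * z) : ∃ k : ℤ, T = 2 * Real.pi * k := by
  have h1 : (s : ℂ) * Complex.exp ((T:ℝ) * Complex.I) = ((1:ℝ):ℂ) := by
    have h2 : ((s:ℂ) * Complex.exp ((T:ℝ)*Complex.I)) * z = 1 * z := by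
      rw [one_mul, ← h]
    have := mul_right_cancel₀ hz h2
    rw [this]; norm_num
  obtain ⟨n, hn, hcos⟩ := angle_aux hs (Or.inl rfl) h1
  have hcpos : 0 < Real.cos T := by rw [hcos]; positivity
  rcases Int.even_or_odd n with ⟨m, hm⟩ | ⟨m, hm⟩
  · refine ⟨m, ?_⟩
    rw [hn, hm]; push_cast; ring
  · exfalso
    rw [hn, hm] at hcpos
    have he : ((2*m+1 : ℤ):ℝ) * Real.pi = (m:ℝ)*(2*Real.pi) + Real.pi := by push_cast; ring
    rw [he, Real.cos_add_pi, Real.cos_int_mul_two_pi] at hcpos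
    linarith

theorem angle_odd {s T : ℝ} {z : ℂ} (hs : 0 < s) (hz : z ≠ 0)
    (h : -z = (s:ℝ) * Complex.exp ((T:ℝ) * Complex.I) * z) : ∃ k : ℤ, T = Real.pi + 2 * Real.pi * k := by
  have h1 : (s : ℂ) * Complex.exp ((T:ℝ) * Complex.I) = ((-1:ℝ):ℂ) := by
    have h2 : ((s:ℂ) * Complex.exp ((T:ℝ)*Complex.I)) * z = ((-1:ℝ):ℂ) * z := by
      rw [← h]; push_cast; ring
    exact mul_right_cancel₀ hz h2
  obtain ⟨n, hn, hcos⟩ := angle_aux hs (Or.inr rfl) h1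
  have hcneg : Real.cos T < 0 := by
    rw [hcos]
    apply div_neg_of_neg_of_pos _ hs
    norm_num
  rcases Int.even_or_odd n with ⟨m, hm⟩ | ⟨m, hm⟩
  · exfalso
    rw [hn, hm] at hcneg
    have he : ((m+m : ℤ):ℝ) * Real.pi = (m:ℝ)*(2*Real.pi) := by push_cast; ring
    rw [he, Real.cos_int_mul_two_pi] at hcneg
    linarith
  · refine ⟨m, ?_⟩
    rw [hn, hm]
    push_cast
    ring

theorem const_of_locally_const {f : ℝ → ℝ}
    (h : ∀ s ∈ Icc (0:ℝ) 1, ∃ δ > 0, ∀ s' ∈ Icc (0:ℝ) 1, |s' - s| < δ → f s' = f s) :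
    f 1 = f 0 := by
  set A : Set ℝ := {s | s ∈ Icc (0:ℝ) 1 ∧ f s = f 0} with hA
  have h0A : (0:ℝ) ∈ A := ⟨by norm_num, rfl⟩
  have hbdd : BddAbove A := ⟨1, fun x hx => hx.1.2⟩
  set T := sSup A with hT
  have hT0 : 0 ≤ T := le_csSup hbdd h0A
  have hT1 : T ≤ 1 := csSup_le ⟨0, h0A⟩ (fun x hx => hx.1.2)
  have hTI : T ∈ Icc (0:ℝ) 1 := ⟨hT0, hT1⟩
  obtain ⟨δ, hδ, hloc⟩ := h T hTI
  have hTA : f T = f 0 := by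
    obtain ⟨s, hsA, hs⟩ := exists_lt_of_lt_csSup ⟨0, h0A⟩ (show T - δ < T by linarith)
    have hsle : s ≤ T := le_csSup hbdd hsA
    have := hloc s hsA.1 (by rw [abs_sub_lt_iff]; constructor <;> linarith)
    rw [← this, hsA.2]
  by_cases hT1' : T = 1
  · rw [← hT1', hTA]
  · exfalso
    have hTlt : T < 1 := lt_of_le_of_ne hT1 hT1'
    set s' := min (T + δ/2) 1 with hs'
    have hs'I : s' ∈ Icc (0:ℝ) 1 := ⟨le_min (by linarith) (by norm_num), min_le_right _ _⟩
    have hs'T : |s' - T| < δ := by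
      have h1 : s' ≤ T + δ/2 := min_le_left _ _
      have h2 : T ≤ s' := le_min (by linarith) (by linarith)
      rw [abs_sub_lt_iff]; constructor <;> linarith
    have hfs' : f s' = f 0 := by rw [hloc s' hs'I hs'T, hTA]
    have : s' ≤ T := le_csSup hbdd ⟨hs'I, hfs'⟩
    have : T < s' := lt_min (by linarith) hTlt
    linarith

theorem square {E F : ℝ → ℂ} (hEc : ContinuousOn E (Icc 0 1)) (hFc : ContinuousOn F (Icc 0 1))
    (hd : ∀ s ∈ Icc (0:ℝ) 1, ∀ t ∈ Icc (0:ℝ) 1, F t ≠ E s) :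
    V (fun t => F t - E 1) - V (fun t => F t - E 0)
      = V (fun s => F 1 - E s) - V (fun s => F 0 - E s) := by
  have h0I : (0:ℝ) ∈ Icc (0:ℝ) 1 := by norm_num
  have h1I : (1:ℝ) ∈ Icc (0:ℝ) 1 := by norm_num
  have hnice1 : Nice (fun s => F 1 - E s) :=
    ⟨continuousOn_const.sub hEc, fun s hs => sub_ne_zero.mpr (hd s hs 1 h1I)⟩
  have hnice0 : Nice (fun s => F 0 - E s) :=
    ⟨continuousOn_const.sub hEc, fun s hs => sub_ne_zero.mpr (hd s hs 0 h0I)⟩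
  obtain ⟨Λ₁, hΛ₁⟩ := exists_lift hnice1
  obtain ⟨Λ₀, hΛ₀⟩ := exists_lift hnice0
  set φ : ℝ → ℝ := fun s => V (fun t => F t - E s) with hφ
  set Ψ : ℝ → ℝ := fun s => φ s - (Λ₁ s).im + (Λ₀ s).im with hΨ
  have locconst : ∀ s₀ ∈ Icc (0:ℝ) 1, ∃ δ > 0, ∀ s ∈ Icc (0:ℝ) 1, |s - s₀| < δ → Ψ s = Ψ s₀ := by
    intro s₀ hs₀
    have hu₀ : Nice (fun t => F t - E s₀) :=
      ⟨hFc.sub continuousOn_const, fun t ht => sub_ne_zero.mpr (hd s₀ hs₀ t ht)⟩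
    obtain ⟨ℓ₀, hℓ₀⟩ := exists_lift hu₀
    -- minimum of |F t - E s₀|
    obtain ⟨t₀, ht₀, hmin⟩ := isCompact_Icc.exists_isMinOn
      (f := fun t => ‖F t - E s₀‖) ⟨0, h0I⟩
      (continuous_norm.comp_continuousOn (hFc.sub continuousOn_const))
    set m : ℝ := ‖F t₀ - E s₀‖ with hm
    have hmpos : 0 < m := norm_pos_iff.mpr (sub_ne_zero.mpr (hd s₀ hs₀ t₀ ht₀))
    have hmle : ∀ t ∈ Icc (0:ℝ) 1, m ≤ ‖F t - E s₀‖ := fun t ht => hmin ht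
    -- continuity of E at s₀ within Icc
    have hEw : ContinuousWithinAt E (Icc 0 1) s₀ := hEc s₀ hs₀
    rw [Metric.continuousWithinAt_iff] at hEw
    obtain ⟨δ, hδ, hEδ⟩ := hEw m hmpos
    refine ⟨δ, hδ, ?_⟩
    intro s hsI hsδ
    have hEs : ‖E s - E s₀‖ < m := by
      have := hEδ hsI (by rwa [Real.dist_eq])
      rwa [Complex.dist_eq] at this
    -- ratios
    have hratio : ∀ t ∈ Icc (0:ℝ) 1,
        ‖(F t - E s) / (F t - E s₀) - 1‖ < 1 := by
      intro t ht
      have hne : F t - E s₀ ≠ 0 := sub_ne_zero.mpr (hd s₀ hs₀ t ht)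
      have heq : (F t - E s) / (F t - E s₀) - 1 = (E s₀ - E s) / (F t - E s₀) := by
        field_simp
        ring
      rw [heq, norm_div]
      have h1 : ‖E s₀ - E s‖ < m := by
        rw [← norm_neg]; simpa [neg_sub] using hEs
      have h2 : 0 < ‖F t - E s₀‖ := norm_pos_iff.mpr hne
      rw [div_lt_one h2]
      exact lt_of_lt_of_le h1 (hmle t ht)
    have hrne : ∀ t ∈ Icc (0:ℝ) 1, (F t - E s) / (F t - E s₀) ≠ 0 := by
      intro t ht
      exact div_ne_zero (sub_ne_zero.mpr (hd s hsI t ht)) (sub_ne_zero.mpr (hd s₀ hs₀ t ht))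
    -- lift of t ↦ F t - E s
    have hLs : IsLift (fun t => F t - E s)
        (fun t => ℓ₀ t + Complex.log ((F t - E s) / (F t - E s₀))) := by
      constructor
      · apply ContinuousOn.add hℓ₀.1
        intro t ht
        refine ContinuousWithinAt.clog ?_ (ball_mem_slitPlane (hratio t ht))
        exact ((hFc.sub continuousOn_const).div (hFc.sub continuousOn_const)
          (fun x hx => sub_ne_zero.mpr (hd s₀ hs₀ x hx))) t ht
      · intro t ht
        rw [Complex.exp_add, hℓ₀.2 t ht, Complex.exp_log (hrne t ht)]
        field_simp [sub_ne_zero.mpr (hd s₀ hs₀ t ht)]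
    have hφs : φ s = φ s₀ + (Complex.log ((F 1 - E s) / (F 1 - E s₀))).im
        - (Complex.log ((F 0 - E s) / (F 0 - E s₀))).im := by
      rw [hφ]
      simp only
      rw [V_eq_lift hLs, V_eq_lift hℓ₀]
      simp [Complex.add_im, Complex.sub_im]
      ring
    -- the two integer-valued functions
    set N : Set ℝ := Icc (0:ℝ) 1 ∩ Metric.ball s₀ δ with hN
    have hNpre : IsPreconnected N := ((convex_Icc (0:ℝ) 1).inter (convex_ball s₀ δ)).isPreconnected
    have hs₀N : s₀ ∈ N := ⟨hs₀, Metric.mem_ball_self hδ⟩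
    have hsN : s ∈ N := ⟨hsI, by rwa [Metric.mem_ball, Real.dist_eq]⟩
    -- general helper for j = 1, 0
    have key : ∀ (j : ℝ), j ∈ Icc (0:ℝ) 1 → ∀ (Λ : ℝ → ℂ), IsLift (fun x => F j - E x) Λ →
        (Complex.log ((F j - E s) / (F j - E s₀))).im - (Λ s).im + (Λ s₀).im = 0 := by
      intro j hj Λ hΛ
      set g : ℝ → ℝ := fun x => (Complex.log ((F j - E x) / (F j - E s₀))).im
        - (Λ x).im + (Λ s₀).im with hg
      have hslit : ∀ x ∈ N, (F j - E x) / (F j - E s₀) ∈ Complex.slitPlane := by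
        intro x hx
        apply ball_mem_slitPlane
        have hne : F j - E s₀ ≠ 0 := sub_ne_zero.mpr (hd s₀ hs₀ j hj)
        have heq : (F j - E x) / (F j - E s₀) - 1 = (E s₀ - E x) / (F j - E s₀) := by
          field_simp
          ring
        rw [heq, norm_div]
        have h1 : ‖E s₀ - E x‖ < m := by
          have := hEδ hx.1 (by rw [Real.dist_eq]; simpa [Metric.mem_ball, Real.dist_eq] using hx.2)
          rw [Complex.dist_eq] at this
          rw [← norm_neg]; simpa [neg_sub] using this
        rw [div_lt_one (norm_pos_iff.mpr hne)]
        exact lt_of_lt_of_le h1 (hmle j hj)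
      have hgcont : ContinuousOn g N := by
        apply ContinuousOn.add _ continuousOn_const
        apply ContinuousOn.sub
        · apply Complex.continuous_im.comp_continuousOn
          intro x hx
          refine ContinuousWithinAt.clog ?_ (hslit x hx)
          refine ContinuousWithinAt.div ?_ continuousWithinAt_const
            (sub_ne_zero.mpr (hd s₀ hs₀ j hj))
          exact (continuousOn_const.sub (hEc.mono (inter_subset_left))) x hx
        · exact Complex.continuous_im.comp_continuousOn (hΛ.1.mono (inter_subset_left))
      have hgint : ∀ x ∈ N, ∃ k : ℤ, g x = 2 * Real.pi * k := by
        intro x hx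
        have hrx : (F j - E x) / (F j - E s₀) ≠ 0 :=
          div_ne_zero (sub_ne_zero.mpr (hd x hx.1 j hj)) (sub_ne_zero.mpr (hd s₀ hs₀ j hj))
        have he1 : Complex.exp (Complex.log ((F j - E x)/(F j - E s₀))) = (F j - E x)/(F j - E s₀) :=
          Complex.exp_log hrx
        have he2 : Complex.exp (Λ x - Λ s₀) = (F j - E x)/(F j - E s₀) := by
          rw [Complex.exp_sub, hΛ.2 x hx.1, hΛ.2 s₀ hs₀]
        have he3 : Complex.exp (Complex.log ((F j - E x)/(F j - E s₀)) - (Λ x - Λ s₀)) = 1 := by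
          rw [Complex.exp_sub, he1, he2, div_self]
          rw [← he2]; exact Complex.exp_ne_zero _
        obtain ⟨n, hn⟩ := Complex.exp_eq_one_iff.mp he3
        refine ⟨n, ?_⟩
        have := congrArg Complex.im hn
        simp only [Complex.sub_im, Complex.mul_im, Complex.mul_re] at this
        simp only [hg]
        push_cast at this ⊢
        simp at this
        linarith [this]
      have hg0 : g s₀ = 0 := by
        simp only [hg]
        rw [div_self (sub_ne_zero.mpr (hd s₀ hs₀ j hj)), Complex.log_one]
        simp
      have := eq_of_int_valued hNpre hgcont hgint hsN hs₀N
      rw [hg0] at this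
      simpa [hg] using this
    have k1 := key 1 h1I Λ₁ hΛ₁
    have k0 := key 0 h0I Λ₀ hΛ₀
    rw [hΨ]
    simp only
    rw [hφs]
    linarith [k1, k0]
  have hconst := const_of_locally_const locconst
  rw [hΨ] at hconst
  simp only at hconst
  have e1 : φ 1 = V (fun t => F t - E 1) := rfl
  have e0 : φ 0 = V (fun t => F t - E 0) := rfl
  rw [V_eq_lift hΛ₁, V_eq_lift hΛ₀]
  simp only [Complex.sub_im]
  rw [← e1, ← e0]
  linarith [hconst]

/-- A continuous curve from `a` to `b` whose interior lies in `G`. -/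
structure LegData (G : Set ℂ) (a b : ℂ) where
  f : ℝ → ℂ
  cont : ContinuousOn f (Icc 0 1)
  f0 : f 0 = a
  f1 : f 1 = b
  mem : ∀ t ∈ Ico (0:ℝ) 1, f t ∈ G

/-- construct a leg from hub to an accessible point -/
theorem exists_leg {G : Set ℂ} (hG : IsOpen G) (hconn : IsConnected G) {y : ℂ}
    (hy : Accessible G y) {g : ℂ} (hg : g ∈ G) : Nonempty (LegData G g y) := by
  obtain ⟨-, γ, hγc, hγm, hγ1⟩ := hy
  have hγ0 : γ 0 ∈ G := hγm 0 (by norm_num)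
  have hpc : IsPathConnected G := (hG.isConnected_iff_isPathConnected).mp hconn
  have hjoin : JoinedIn G g (γ 0) := hpc.joinedIn g hg (γ 0) hγ0
  set P₁ : Path g (γ 0) := hjoin.somePath with hP₁
  have hP₁mem : ∀ t, P₁ t ∈ G := hjoin.somePath_mem
  set P₂ : Path (γ 0) y :=
    { toFun := fun t => γ t
      continuous_toFun := by
        apply hγc.comp_continuous continuous_subtype_val
        exact fun t => t.2
      source' := rfl
      target' := hγ1 } with hP₂
  set P : Path g y := P₁.trans P₂ with hP
  refine ⟨⟨P.extend, P.continuous_extend.continuousOn, P.extend_zero, P.extend_one, ?_⟩⟩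
  intro t ht
  rw [Path.extend_apply P ⟨ht.1, le_of_lt ht.2⟩]
  rw [hP, Path.trans_apply]
  split_ifs with h
  · exact hP₁mem _
  · apply hγm
    push_neg at h
    have h' : (1:ℝ)/2 < t := h
    have ht1 : t < 1 := ht.2
    constructor
    · show (0:ℝ) ≤ 2*t - 1
      linarith
    · show (2*t - 1 : ℝ) < 1
      linarith

/-- angle of a leg seen from an external point -/
noncomputable def Bv {G : Set ℂ} {a b : ℂ} (L : LegData G a b) (v : ℂ) : ℝ :=
  V (fun t => L.f t - v)

theorem Bv_nice {G : Set ℂ} {a b : ℂ} (L : LegData G a b) {v : ℂ}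
    (hv : v ∉ G) (hvb : v ≠ b) : Nice (fun t => L.f t - v) := by
  refine ⟨L.cont.sub continuousOn_const, ?_⟩
  intro t ht
  show L.f t - v ≠ 0
  rcases lt_or_eq_of_le ht.2 with h1 | h1
  · have := L.mem t ⟨ht.1, h1⟩
    intro hc
    rw [sub_eq_zero] at hc
    exact hv (hc ▸ this)
  · rw [h1, L.f1]
    intro hc
    rw [sub_eq_zero] at hc
    exact hvb hc.symm

theorem Bv_rel {G : Set ℂ} {a b : ℂ} (L : LegData G a b) {v : ℂ}
    (hv : v ∉ G) (hvb : v ≠ b) :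
    ∃ s : ℝ, 0 < s ∧ b - v = (s:ℝ) * Complex.exp ((Bv L v : ℝ) * Complex.I) * (a - v) := by
  obtain ⟨s, hs, h⟩ := V_exp (Bv_nice L hv hvb)
  refine ⟨s, hs, ?_⟩
  simp only [L.f0, L.f1] at h
  exact h

/-- pointwise distinctness of two legs in different domains -/
theorem legs_disjoint {G G' : Set ℂ} {a b a' b' : ℂ} (L : LegData G a b) (M : LegData G' a' b')
    (hGG' : Disjoint G G') (hbG' : b ∉ G') (hb'G : b' ∉ G) (hbb' : b' ≠ b) :
    ∀ s ∈ Icc (0:ℝ) 1, ∀ t ∈ Icc (0:ℝ) 1, M.f t ≠ L.f s := by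
  intro s hs t ht
  have hMt : M.f t ∈ G' ∨ M.f t = b' := by
    rcases lt_or_eq_of_le ht.2 with h1 | h1
    · exact Or.inl (M.mem t ⟨ht.1, h1⟩)
    · exact Or.inr (by rw [h1, M.f1])
  have hLs : L.f s ∈ G ∨ L.f s = b := by
    rcases lt_or_eq_of_le hs.2 with h1 | h1
    · exact Or.inl (L.mem s ⟨hs.1, h1⟩)
    · exact Or.inr (by rw [h1, L.f1])
  rcases hMt with hM | hM <;> rcases hLs with hL | hL <;> intro hc
  · exact (disjoint_left.mp hGG' hL) (hc ▸ hM)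
  · exact hbG' (by rw [← hL, ← hc]; exact hM)
  · exact hb'G (by rw [← hM, hc]; exact hL)
  · exact hbb' (by rw [← hM, ← hL, hc])

/-- the square/cell identity for two disjoint legs -/
theorem cell_eq {G G' : Set ℂ} {a b a' b' : ℂ} (L : LegData G a b) (M : LegData G' a' b')
    (hd : ∀ s ∈ Icc (0:ℝ) 1, ∀ t ∈ Icc (0:ℝ) 1, M.f t ≠ L.f s) :
    Bv M b - Bv M a = Bv L b' - Bv L a' := by
  have hsq := square L.cont M.cont hd
  have hd' : ∀ t ∈ Icc (0:ℝ) 1, ∀ s ∈ Icc (0:ℝ) 1, L.f s ≠ M.f t :=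
    fun t ht s hs => (hd s hs t ht).symm
  have e1 : V (fun t => M.f t - L.f 1) = Bv M b := by rw [Bv, L.f1]
  have e2 : V (fun t => M.f t - L.f 0) = Bv M a := by rw [Bv, L.f0]
  have e3 : V (fun s => M.f 1 - L.f s) = Bv L b' := by
    have hn : Nice (fun s => L.f s - M.f 1) := by
      refine ⟨L.cont.sub continuousOn_const, ?_⟩
      intro s hs
      rw [sub_ne_zero]
      exact fun hc => hd s hs 1 (by norm_num) hc.symm
    have := V_neg hn
    simp only [neg_sub] at this
    rw [Bv]
    simp only [← M.f1]
    exact this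
  have e4 : V (fun s => M.f 0 - L.f s) = Bv L a' := by
    have hn : Nice (fun s => L.f s - M.f 0) := by
      refine ⟨L.cont.sub continuousOn_const, ?_⟩
      intro s hs
      rw [sub_ne_zero]
      exact fun hc => hd s hs 0 (by norm_num) hc.symm
    have := V_neg hn
    simp only [neg_sub] at this
    rw [Bv]
    simp only [← M.f0]
    exact this
  rw [e1, e2, e3, e4] at hsq
  exact hsq

/- chain step helpers -/
theorem step_comp {z0 z1 z2 : ℂ} {s T t b : ℝ}
    (h1 : 0 < s ∧ z1 = (s:ℝ) * Complex.exp ((T:ℝ) * Complex.I) * z0)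
    (h2 : 0 < t ∧ z2 = (t:ℝ) * Complex.exp ((b:ℝ) * Complex.I) * z1) :
    0 < t*s ∧ z2 = ((t*s : ℝ)) * Complex.exp (((T+b : ℝ)) * Complex.I) * z0 := by
  refine ⟨mul_pos h2.1 h1.1, ?_⟩
  rw [h2.2, h1.2]
  have he : Complex.exp (((T+b:ℝ)) * Complex.I)
      = Complex.exp ((T:ℝ) * Complex.I) * Complex.exp ((b:ℝ) * Complex.I) := by
    rw [← Complex.exp_add]
    congr 1
    push_cast
    ring
  rw [he]
  push_cast
  ring

theorem inv_rel {z0 z1 : ℂ} {s B : ℝ} (hs : 0 < s)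
    (h : z1 = (s:ℝ) * Complex.exp ((B:ℝ) * Complex.I) * z0) :
    z0 = ((s⁻¹ : ℝ)) * Complex.exp (((-B : ℝ)) * Complex.I) * z1 := by
  have hsne : (s:ℂ) ≠ 0 := by
    simpa using ne_of_gt hs
  have hene : Complex.exp ((B:ℝ) * Complex.I) ≠ 0 := Complex.exp_ne_zero _
  rw [h]
  have he : Complex.exp (((-B:ℝ)) * Complex.I) * Complex.exp ((B:ℝ) * Complex.I) = 1 := by
    rw [← Complex.exp_add]
    have : ((-B:ℝ):ℂ) * Complex.I + (B:ℝ) * Complex.I = 0 := by push_cast; ring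
    rw [this, Complex.exp_zero]
  have h1 : ((s⁻¹:ℝ):ℂ) * (s:ℂ) = 1 := by
    push_cast
    field_simp
  have key : ((s⁻¹:ℝ):ℂ) * Complex.exp (((-B:ℝ)) * Complex.I)
      * ((s:ℝ) * Complex.exp ((B:ℝ)*Complex.I) * z0) = z0 := by
    calc ((s⁻¹:ℝ):ℂ) * Complex.exp (((-B:ℝ)) * Complex.I)
        * ((s:ℝ) * Complex.exp ((B:ℝ)*Complex.I) * z0)
        = (((s⁻¹:ℝ):ℂ) * (s:ℂ)) * (Complex.exp (((-B:ℝ))*Complex.I)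
          * Complex.exp ((B:ℝ)*Complex.I)) * z0 := by ring
      _ = 1 * 1 * z0 := by rw [h1, he]
      _ = z0 := by ring
  exact key.symm

theorem neg_rel {v g y : ℂ} {s B : ℝ}
    (h : y - v = (s:ℝ) * Complex.exp ((B:ℝ) * Complex.I) * (g - v)) :
    v - y = (s:ℝ) * Complex.exp ((B:ℝ) * Complex.I) * (v - g) := by
  linear_combination -h

end AccessProof

open AccessProof

/-- At most two points of the plane are accessible from each of three pairwise
disjoint nonempty connected open sets. -/
theorem accessible_from_three_domains_le_two
    (G₁ G₂ G₃ : Set ℂ)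
    (h₁ : IsOpen G₁) (h₂ : IsOpen G₂) (h₃ : IsOpen G₃)
    (hc₁ : IsConnected G₁) (hc₂ : IsConnected G₂) (hc₃ : IsConnected G₃)
    (h₁₂ : Disjoint G₁ G₂) (h₁₃ : Disjoint G₁ G₃) (h₂₃ : Disjoint G₂ G₃) :
    {p : ℂ | Accessible G₁ p ∧ Accessible G₂ p ∧ Accessible G₃ p}.encard ≤ 2 := by
  by_contra hcon
  rw [not_le] at hcon
  have h3le : (3:ℕ∞) ≤ {p : ℂ | Accessible G₁ p ∧ Accessible G₂ p ∧ Accessible G₃ p}.encard := by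
    have h := Order.add_one_le_of_lt hcon
    have h2 : ((2:ℕ∞) + 1) = 3 := by norm_num
    rwa [h2] at h
  obtain ⟨t, htS, ht3⟩ := Set.exists_subset_encard_eq h3le
  obtain ⟨p, q, r, hpq, hpr, hqr, rfl⟩ := Set.encard_eq_three.mp ht3
  have hp := htS (show p ∈ ({p, q, r} : Set ℂ) by simp)
  have hq := htS (show q ∈ ({p, q, r} : Set ℂ) by simp)
  have hr := htS (show r ∈ ({p, q, r} : Set ℂ) by simp)
  simp only [Set.mem_setOf_eq] at hp hq hr
  obtain ⟨hA1p, hA2p, hA3p⟩ := hp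
  obtain ⟨hA1q, hA2q, hA3q⟩ := hq
  obtain ⟨hA1r, hA2r, hA3r⟩ := hr
  -- non-membership facts
  have hpG1 : p ∉ G₁ := hA1p.1
  have hpG2 : p ∉ G₂ := hA2p.1
  have hpG3 : p ∉ G₃ := hA3p.1
  have hqG1 : q ∉ G₁ := hA1q.1
  have hqG2 : q ∉ G₂ := hA2q.1
  have hqG3 : q ∉ G₃ := hA3q.1
  have hrG1 : r ∉ G₁ := hA1r.1
  have hrG2 : r ∉ G₂ := hA2r.1
  have hrG3 : r ∉ G₃ := hA3r.1
  -- hubs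
  obtain ⟨γ1, hγ1c, hγ1m, hγ1e⟩ := hA1p.2
  obtain ⟨γ2, hγ2c, hγ2m, hγ2e⟩ := hA2p.2
  obtain ⟨γ3, hγ3c, hγ3m, hγ3e⟩ := hA3p.2
  set g1 : ℂ := γ1 0 with hg1def
  set g2 : ℂ := γ2 0 with hg2def
  set g3 : ℂ := γ3 0 with hg3def
  have hg1 : g1 ∈ G₁ := hγ1m 0 ⟨le_refl 0, one_pos⟩
  have hg2 : g2 ∈ G₂ := hγ2m 0 ⟨le_refl 0, one_pos⟩
  have hg3 : g3 ∈ G₃ := hγ3m 0 ⟨le_refl 0, one_pos⟩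
  have hg1G2 : g1 ∉ G₂ := disjoint_left.mp h₁₂ hg1
  have hg1G3 : g1 ∉ G₃ := disjoint_left.mp h₁₃ hg1
  have hg2G1 : g2 ∉ G₁ := disjoint_right.mp h₁₂ hg2
  have hg2G3 : g2 ∉ G₃ := disjoint_left.mp h₂₃ hg2
  have hg3G1 : g3 ∉ G₁ := disjoint_right.mp h₁₃ hg3
  have hg3G2 : g3 ∉ G₂ := disjoint_right.mp h₂₃ hg3
  -- hub ≠ point
  have hg1q : g1 ≠ q := fun h => hqG1 (h ▸ hg1)
  have hg2q : g2 ≠ q := fun h => hqG2 (h ▸ hg2)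
  have hg3q : g3 ≠ q := fun h => hqG3 (h ▸ hg3)
  have hg2r : g2 ≠ r := fun h => hrG2 (h ▸ hg2)
  have hg3r : g3 ≠ r := fun h => hrG3 (h ▸ hg3)
  -- legs
  obtain ⟨Lp1⟩ := exists_leg h₁ hc₁ hA1p hg1
  obtain ⟨Lp2⟩ := exists_leg h₂ hc₂ hA2p hg2
  obtain ⟨Lp3⟩ := exists_leg h₃ hc₃ hA3p hg3
  obtain ⟨Lq1⟩ := exists_leg h₁ hc₁ hA1q hg1
  obtain ⟨Lq2⟩ := exists_leg h₂ hc₂ hA2q hg2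
  obtain ⟨Lq3⟩ := exists_leg h₃ hc₃ hA3q hg3
  obtain ⟨Lr1⟩ := exists_leg h₁ hc₁ hA1r hg1
  obtain ⟨Lr2⟩ := exists_leg h₂ hc₂ hA2r hg2
  obtain ⟨Lr3⟩ := exists_leg h₃ hc₃ hA3r hg3
  -- the 12 basic relations
  obtain ⟨s1, hs1, hr1⟩ := Bv_rel Lp1 hqG1 (Ne.symm hpq)  -- q ∉ G₁, q ≠ p
  obtain ⟨s2, hs2, hr2⟩ := Bv_rel Lq3 hg1G3 hg1q
  obtain ⟨s3, hs3, hr3⟩ := Bv_rel Lr1 hg3G1 hg3r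
  obtain ⟨s4, hs4, hr4⟩ := Bv_rel Lr2 hg3G2 hg3r
  obtain ⟨s5, hs5, hr5⟩ := Bv_rel Lq3 hg2G3 hg2q
  obtain ⟨s6, hs6, hr6⟩ := Bv_rel Lr2 hqG2 hqr
  obtain ⟨s7, hs7, hr7⟩ := Bv_rel Lq2 hrG2 (Ne.symm hqr)
  obtain ⟨s8, hs8, hr8⟩ := Bv_rel Lr1 hg2G1 hg2r
  obtain ⟨s9, hs9, hr9⟩ := Bv_rel Lq1 hg2G1 hg2q
  obtain ⟨s10, hs10, hr10⟩ := Bv_rel Lq2 hg1G2 hg1q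
  obtain ⟨s11, hs11, hr11⟩ := Bv_rel Lq1 hg3G1 hg3q
  obtain ⟨s12, hs12, hr12⟩ := Bv_rel Lq2 hg3G2 hg3q
  -- W₀ chain: diff = (q - p) initially
  have c0 : (0:ℝ) < 1 ∧ (q - p) = ((1:ℝ)) * Complex.exp (((0:ℝ)) * Complex.I) * (q - p) := by
    constructor
    · norm_num
    · push_cast; simp
  have c1 := step_comp c0 ⟨inv_pos.mpr hs1, inv_rel hs1 (neg_rel hr1)⟩
  have c2 := step_comp c1 ⟨inv_pos.mpr hs2, inv_rel hs2 hr2⟩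
  have c3 := step_comp c2 ⟨hs3, neg_rel hr3⟩
  have c4 := step_comp c3 ⟨inv_pos.mpr hs4, inv_rel hs4 (neg_rel hr4)⟩
  have c5 := step_comp c4 ⟨hs5, hr5⟩
  have c6 := step_comp c5 ⟨hs6, neg_rel hr6⟩
  have c7 := step_comp c6 ⟨inv_pos.mpr hs7, inv_rel hs7 hr7⟩
  have c8 := step_comp c7 ⟨inv_pos.mpr hs8, inv_rel hs8 (neg_rel hr8)⟩
  have c9 := step_comp c8 ⟨hs9, neg_rel hr9⟩
  have c10 := step_comp c9 ⟨inv_pos.mpr hs5, inv_rel hs5 (neg_rel hr5)⟩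
  have c11 := step_comp c10 ⟨hs4, hr4⟩
  have c12 := step_comp c11 ⟨inv_pos.mpr hs3, inv_rel hs3 hr3⟩
  have c13 := step_comp c12 ⟨hs2, neg_rel hr2⟩
  have c14 := step_comp c13 ⟨inv_pos.mpr hs10, inv_rel hs10 (neg_rel hr10)⟩
  have c15 := step_comp c14 ⟨hs8, hr8⟩
  have c16 := step_comp c15 ⟨hs7, neg_rel hr7⟩
  have c17 := step_comp c16 ⟨inv_pos.mpr hs6, inv_rel hs6 hr6⟩
  have c18 := step_comp c17 ⟨inv_pos.mpr hs5, inv_rel hs5 (neg_rel hr5)⟩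
  have c19 := step_comp c18 ⟨hs4, hr4⟩
  have c20 := step_comp c19 ⟨inv_pos.mpr hs3, inv_rel hs3 hr3⟩
  have c21 := step_comp c20 ⟨hs2, neg_rel hr2⟩
  have c22 := step_comp c21 ⟨hs1, hr1⟩
  -- loop chain: diff = (g3 - q)
  have d0 : (0:ℝ) < 1 ∧ (g3 - q) = ((1:ℝ)) * Complex.exp (((0:ℝ)) * Complex.I) * (g3 - q) := by
    constructor
    · norm_num
    · push_cast; simp
  have d1 := step_comp d0 ⟨inv_pos.mpr hs11, inv_rel hs11 (neg_rel hr11)⟩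
  have d2 := step_comp d1 ⟨hs3, neg_rel hr3⟩
  have d3 := step_comp d2 ⟨inv_pos.mpr hs4, inv_rel hs4 (neg_rel hr4)⟩
  have d4 := step_comp d3 ⟨hs12, neg_rel hr12⟩
  -- parity conclusions
  have hqpne : q - p ≠ 0 := sub_ne_zero.mpr (Ne.symm hpq)
  have hg3qne : g3 - q ≠ 0 := sub_ne_zero.mpr hg3q
  obtain ⟨ka, hka⟩ := angle_odd c22.1 hqpne (by rw [neg_sub]; exact c22.2)
  obtain ⟨kb, hkb⟩ := angle_int d4.1 hg3qne d4.2
  -- the 18 cell identities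
  have e1 := cell_eq Lp1 Lq2 (legs_disjoint Lp1 Lq2 h₁₂ hpG2 hqG1 (Ne.symm hpq))
  have e2 := cell_eq Lp1 Lq3 (legs_disjoint Lp1 Lq3 h₁₃ hpG3 hqG1 (Ne.symm hpq))
  have e3 := cell_eq Lp1 Lr2 (legs_disjoint Lp1 Lr2 h₁₂ hpG2 hrG1 (Ne.symm hpr))
  have e4 := cell_eq Lp1 Lr3 (legs_disjoint Lp1 Lr3 h₁₃ hpG3 hrG1 (Ne.symm hpr))
  have e5 := cell_eq Lp2 Lq1 (legs_disjoint Lp2 Lq1 h₁₂.symm hpG1 hqG2 (Ne.symm hpq))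
  have e6 := cell_eq Lp2 Lq3 (legs_disjoint Lp2 Lq3 h₂₃ hpG3 hqG2 (Ne.symm hpq))
  have e7 := cell_eq Lp2 Lr1 (legs_disjoint Lp2 Lr1 h₁₂.symm hpG1 hrG2 (Ne.symm hpr))
  have e8 := cell_eq Lp2 Lr3 (legs_disjoint Lp2 Lr3 h₂₃ hpG3 hrG2 (Ne.symm hpr))
  have e9 := cell_eq Lp3 Lq1 (legs_disjoint Lp3 Lq1 h₁₃.symm hpG1 hqG3 (Ne.symm hpq))
  have e10 := cell_eq Lp3 Lq2 (legs_disjoint Lp3 Lq2 h₂₃.symm hpG2 hqG3 (Ne.symm hpq))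
  have e11 := cell_eq Lp3 Lr1 (legs_disjoint Lp3 Lr1 h₁₃.symm hpG1 hrG3 (Ne.symm hpr))
  have e12 := cell_eq Lp3 Lr2 (legs_disjoint Lp3 Lr2 h₂₃.symm hpG2 hrG3 (Ne.symm hpr))
  have e13 := cell_eq Lq1 Lr2 (legs_disjoint Lq1 Lr2 h₁₂ hqG2 hrG1 (Ne.symm hqr))
  have e14 := cell_eq Lq1 Lr3 (legs_disjoint Lq1 Lr3 h₁₃ hqG3 hrG1 (Ne.symm hqr))
  have e15 := cell_eq Lq2 Lr1 (legs_disjoint Lq2 Lr1 h₁₂.symm hqG1 hrG2 (Ne.symm hqr))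
  have e16 := cell_eq Lq2 Lr3 (legs_disjoint Lq2 Lr3 h₂₃ hqG3 hrG2 (Ne.symm hqr))
  have e17 := cell_eq Lq3 Lr1 (legs_disjoint Lq3 Lr1 h₁₃.symm hqG1 hrG3 (Ne.symm hqr))
  have e18 := cell_eq Lq3 Lr2 (legs_disjoint Lq3 Lr2 h₂₃.symm hqG2 hrG3 (Ne.symm hqr))
  -- combine: 2 * (T_W + T_L) = 0
  have hsum : (2:ℝ) * ((0 + -(Bv Lp1 q) + -(Bv Lq3 g1) + Bv Lr1 g3 + -(Bv Lr2 g3) + Bv Lq3 g2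
      + Bv Lr2 q + -(Bv Lq2 r) + -(Bv Lr1 g2) + Bv Lq1 g2 + -(Bv Lq3 g2) + Bv Lr2 g3
      + -(Bv Lr1 g3) + Bv Lq3 g1 + -(Bv Lq2 g1) + Bv Lr1 g2 + Bv Lq2 r + -(Bv Lr2 q)
      + -(Bv Lq3 g2) + Bv Lr2 g3 + -(Bv Lr1 g3) + Bv Lq3 g1 + Bv Lp1 q)
      + (0 + -(Bv Lq1 g3) + Bv Lr1 g3 + -(Bv Lr2 g3) + Bv Lq2 g3)) = 0 := by
    linarith [e1, e2, e3, e4, e5, e6, e7, e8, e9, e10, e11, e12, e13, e14, e15, e16, e17, e18]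
  rw [hka, hkb] at hsum
  have hfac : Real.pi * (2 + 4*(ka:ℝ) + 4*(kb:ℝ)) = 0 := by linear_combination hsum
  rcases mul_eq_zero.mp hfac with h | h
  · exact Real.pi_ne_zero h
  · have : (2 + 4*ka + 4*kb : ℤ) = 0 := by exact_mod_cast h
    omega
end
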